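/- arXiv:2011.08259 — 6 statements merged into one kernel-verified Lean document; each statement's English description precedes it below -/
import Mathlib

section
/- Let R be a commutative ring such that Spec R is connected. Then a formal Laurent series f = Σ aᵢ hⁱ ∈ R((h)) is a unit if and only if there exists an index i₀ such that a_{i₀} is a unit in R and aⱼ is nilpotent for all j < i₀. -/
open HahnSeries

section Aux

variable {R : Type*} [CommRing R]

lemma laurent_single_nilpotent (i : ℤ) {a : R} (h : IsNilpotent a) :
    IsNilpotent (HahnSeries.single i a : LaurentSeries R) := by
  obtain ⟨n, hn⟩ := h
  refine ⟨n, ?_⟩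
  have key : ∀ m : ℕ,
      (HahnSeries.single i a : LaurentSeries R) ^ m = HahnSeries.single (m • i) (a ^ m) := by
    intro m
    induction m with
    | zero => simp [HahnSeries.single_zero_one]
    | succ m ih =>
        rw [pow_succ, ih, HahnSeries.single_mul_single, succ_nsmul, pow_succ]
  rw [key n, hn, HahnSeries.single_eq_zero]

lemma laurent_isUnit_of_coeff (x : LaurentSeries R) (i₀ : ℤ)
    (hu : IsUnit (x.coeff i₀)) (h0 : ∀ j : ℤ, j < i₀ → x.coeff j = 0) : IsUnit x := by
  set P : PowerSeries R := PowerSeries.mk fun n => x.coeff (i₀ + n) with hP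
  have hx : x = (HahnSeries.single i₀ 1 : LaurentSeries R) * HahnSeries.ofPowerSeries ℤ R P := by
    ext j
    have hrw : j = (j - i₀) + i₀ := by ring
    rcases le_or_gt i₀ j with hj | hj
    · rw [hrw, HahnSeries.coeff_single_mul_add, one_mul]
      have hnat : (j - i₀ : ℤ) = ((j - i₀).toNat : ℤ) := (Int.toNat_of_nonneg (by omega)).symm
      rw [hnat, HahnSeries.ofPowerSeries_apply_coeff, hP, PowerSeries.coeff_mk]
      congr 1
      omega
    · rw [h0 j hj, hrw, HahnSeries.coeff_single_mul_add, one_mul,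
        HahnSeries.ofPowerSeries_apply, HahnSeries.embDomain_notin_range]
      rintro ⟨n, hn⟩
      have hn' : (n : ℤ) = j - i₀ := hn
      omega
  rw [hx]
  refine (IsUnit.of_mul_eq_one (HahnSeries.single (-i₀) 1) ?_).mul ?_
  · rw [HahnSeries.single_mul_single, add_neg_cancel, mul_one, HahnSeries.single_zero_one]
  · refine IsUnit.map _ ?_
    rw [PowerSeries.isUnit_iff_constantCoeff]
    simpa [hP, PowerSeries.constantCoeff_mk] using hu

/-- For a prime `p` and an invertible Laurent series `f` with inverse `g`, there is a
unique index `i` with `aᵢ b₋ᵢ ∉ p`; moreover all coefficients of `f` below that index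
lie in `p`. -/
lemma laurent_aux {f g : LaurentSeries R} (hfg : f * g = 1) (p : PrimeSpectrum R) :
    ∃ i : ℤ, f.coeff i * g.coeff (-i) ∉ p.asIdeal ∧
      ∀ j : ℤ, f.coeff j * g.coeff (-j) ∉ p.asIdeal →
        j = i ∧ ∀ k : ℤ, k < j → f.coeff k ∈ p.asIdeal := by
  haveI := p.2
  set mk : R →+* R ⧸ p.asIdeal := Ideal.Quotient.mk p.asIdeal with hmk
  set F : HahnSeries ℤ (R ⧸ p.asIdeal) := f.map (mk : R →ₙ+* R ⧸ p.asIdeal) with hF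
  set G : HahnSeries ℤ (R ⧸ p.asIdeal) := g.map (mk : R →ₙ+* R ⧸ p.asIdeal) with hG
  have hFc : ∀ i : ℤ, F.coeff i = mk (f.coeff i) := fun i => rfl
  have hGc : ∀ i : ℤ, G.coeff i = mk (g.coeff i) := fun i => rfl
  have hFG : F * G = 1 := by
    rw [hF, hG, ← HahnSeries.map_mul, hfg]
    ext j
    simp only [HahnSeries.map_coeff, HahnSeries.coeff_one]
    split
    · exact map_one mk
    · exact map_zero mk
  have hF0 : F ≠ 0 := by
    intro h
    exact one_ne_zero (α := HahnSeries ℤ (R ⧸ p.asIdeal)) (by rw [← hFG, h, zero_mul])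
  have hG0 : G ≠ 0 := by
    intro h
    exact one_ne_zero (α := HahnSeries ℤ (R ⧸ p.asIdeal)) (by rw [← hFG, h, mul_zero])
  have horder : F.order + G.order = 0 := by
    have h := HahnSeries.order_mul hF0 hG0
    rw [hFG, HahnSeries.order_one] at h
    omega
  have hmem : ∀ a : R, a ∈ p.asIdeal ↔ mk a = 0 := fun a =>
    (Ideal.Quotient.eq_zero_iff_mem).symm
  refine ⟨F.order, ?_, ?_⟩
  · intro hcon
    rw [hmem, map_mul] at hcon
    rcases mul_eq_zero.mp hcon with h | h
    · exact (mt HahnSeries.coeff_order_eq_zero.mp hF0) (by rw [hFc] at *; exact h)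
    · have hGo : G.order = -F.order := by omega
      refine (mt HahnSeries.coeff_order_eq_zero.mp hG0) ?_
      rw [hGo, hGc]
      exact h
  · intro j hj
    rw [hmem, map_mul] at hj
    have hFj : F.coeff j ≠ 0 := by
      rw [hFc]
      intro h
      exact hj (by rw [h, zero_mul])
    have hGj : G.coeff (-j) ≠ 0 := by
      rw [hGc]
      intro h
      exact hj (by rw [h, mul_zero])
    have h1 : F.order ≤ j := HahnSeries.order_le_of_coeff_ne_zero hFj
    have h2 : G.order ≤ -j := HahnSeries.order_le_of_coeff_ne_zero hGj
    have hji : j = F.order := by omega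
    refine ⟨hji, fun k hk => ?_⟩
    have : F.coeff k = 0 := HahnSeries.coeff_eq_zero_of_lt_order (by omega)
    rw [hFc] at this
    rw [hmem]
    exact this

end Aux

/-- Let `R` be a commutative ring such that `Spec R` is connected.
A formal Laurent series `f = Σ aᵢ hⁱ ∈ R((h))` is a unit if and only if there exists an
index `i₀` such that `a_{i₀}` is a unit in `R` and `aⱼ` is nilpotent for all `j < i₀`. -/
theorem laurent_isUnit_iff (R : Type*) [CommRing R]
    (hconn : ConnectedSpace (PrimeSpectrum R)) (f : LaurentSeries R) :
    IsUnit f ↔ ∃ i₀ : ℤ, IsUnit (f.coeff i₀) ∧ ∀ j : ℤ, j < i₀ → IsNilpotent (f.coeff j) := by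
  haveI := hconn
  constructor
  · intro hf
    obtain ⟨g, hfg⟩ := isUnit_iff_exists_inv.mp hf
    obtain ⟨i₀, hi₀, -⟩ := laurent_aux hfg (Classical.arbitrary _)
    -- the basic open set where the order is `i₀` is clopen and nonempty, hence everything
    have hall : ∀ p : PrimeSpectrum R, f.coeff i₀ * g.coeff (-i₀) ∉ p.asIdeal := by
      set U : Set (PrimeSpectrum R) := {p | f.coeff i₀ * g.coeff (-i₀) ∉ p.asIdeal} with hU
      have hUopen : IsOpen U := by
        have : U = ↑(PrimeSpectrum.basicOpen (f.coeff i₀ * g.coeff (-i₀))) := by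
          ext p
          exact (PrimeSpectrum.mem_basicOpen _ _).symm
        rw [this]
        exact (PrimeSpectrum.basicOpen _).isOpen
      have hUc : IsOpen Uᶜ := by
        rw [isOpen_iff_mem_nhds]
        intro p hp
        obtain ⟨i, hi, huniq⟩ := laurent_aux hfg p
        refine mem_nhds_iff.mpr ⟨{q | f.coeff i * g.coeff (-i) ∉ q.asIdeal}, ?_, ?_, hi⟩
        · intro q hq hqU
          obtain ⟨k, -, huniq'⟩ := laurent_aux hfg q
          have h1 : i = k := (huniq' i hq).1
          have h2 : i₀ = k := (huniq' i₀ hqU).1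
          have : i = i₀ := by omega
          exact hp (by rw [hU]; exact this ▸ hi)
        · have : {q : PrimeSpectrum R | f.coeff i * g.coeff (-i) ∉ q.asIdeal} =
              ↑(PrimeSpectrum.basicOpen (f.coeff i * g.coeff (-i))) := by
            ext q
            exact (PrimeSpectrum.mem_basicOpen _ _).symm
          rw [this]
          exact (PrimeSpectrum.basicOpen _).isOpen
      have hclopen : IsClopen U := ⟨isOpen_compl_iff.mp hUc, hUopen⟩
      rcases isClopen_iff.mp hclopen with h | h
      · exact absurd (h ▸ hi₀ : (Classical.arbitrary _) ∈ (∅ : Set (PrimeSpectrum R)))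
          (Set.notMem_empty _)
      · intro p
        have : p ∈ U := h ▸ Set.mem_univ p
        exact this
    refine ⟨i₀, ?_, ?_⟩
    · by_contra h
      obtain ⟨M, hM, hle⟩ := Ideal.exists_le_maximal (Ideal.span {f.coeff i₀})
        (by rwa [Ne, Ideal.span_singleton_eq_top])
      haveI := hM.isPrime
      refine hall ⟨M, hM.isPrime⟩ ?_
      exact Ideal.mul_mem_right _ _ (hle (Ideal.mem_span_singleton_self _))
    · intro j hj
      rw [nilpotent_iff_mem_prime]
      intro J hJ
      obtain ⟨k, -, huniq⟩ := laurent_aux hfg ⟨J, hJ⟩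
      exact (huniq i₀ (hall ⟨J, hJ⟩)).2 j hj
  · rintro ⟨i₀, hu, hnil⟩
    classical
    have hfin : Set.Finite {j : ℤ | f.coeff j ≠ 0 ∧ j < i₀} := by
      set S := {j : ℤ | f.coeff j ≠ 0 ∧ j < i₀} with hS
      rcases S.eq_empty_or_nonempty with h | h
      · rw [h]; exact Set.finite_empty
      · have hSWF : S.IsWF := f.isPWO_support.isWF.mono (fun j hj => hj.1)
        refine Set.Finite.subset (Set.finite_Icc (hSWF.min h) i₀) (fun j hj => ?_)
        exact ⟨hSWF.min_le h hj, hj.2.le⟩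
    set t : Finset ℤ := hfin.toFinset with ht
    set n : LaurentSeries R := ∑ j ∈ t, HahnSeries.single j (f.coeff j) with hn
    have hnc : ∀ k : ℤ, n.coeff k = if k ∈ t then f.coeff k else 0 := by
      intro k
      have : n.coeff k = ∑ j ∈ t, (HahnSeries.single j (f.coeff j) : LaurentSeries R).coeff k := by
        rw [hn]
        exact map_sum (HahnSeries.coeff.addMonoidHom k) _ _
      rw [this]
      rw [(Finset.sum_ite_eq t k (fun j => f.coeff j)).symm]
      refine Finset.sum_congr rfl (fun j _ => ?_)
      rw [HahnSeries.coeff_single]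
      simp [eq_comm]
    have hnnil : IsNilpotent n := by
      rw [hn]
      refine isNilpotent_sum (fun j hj => ?_)
      rw [ht, Set.Finite.mem_toFinset] at hj
      exact laurent_single_nilpotent j (hnil j hj.2)
    have hg : IsUnit (f - n) := by
      refine laurent_isUnit_of_coeff (f - n) i₀ ?_ ?_
      · have hi₀t : i₀ ∉ t := by
          rw [ht, Set.Finite.mem_toFinset]
          exact fun h => absurd h.2 (lt_irrefl i₀)
        have : (f - n).coeff i₀ = f.coeff i₀ := by
          rw [HahnSeries.coeff_sub, hnc, if_neg hi₀t, sub_zero]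
        rwa [this]
      · intro j hj
        rw [HahnSeries.coeff_sub, hnc]
        by_cases hjt : j ∈ t
        · rw [if_pos hjt, sub_self]
        · rw [if_neg hjt, sub_zero]
          by_contra h
          exact hjt (by rw [ht, Set.Finite.mem_toFinset]; exact ⟨h, hj⟩)
    have : f = (f - n) + n := by ring
    rw [this]
    exact IsNilpotent.isUnit_add_left_of_commute hnnil hg (Commute.all _ _)
end

section
/- Let R be a commutative ring with no nontrivial idempotents. If A(h) · B(h) = 1 in R((h)) with A(h) = a_{-N} h^{-N} + (higher order terms), B(h) = b_{-M} h^{-M} + (higher order terms), a_{-N} ≠ 0, b_{-M} ≠ 0, and N + M > 0, then a_{-N} is nilpotent. -/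
private lemma order_eq_of_coeff' {R : Type*} [CommRing R] (A : LaurentSeries R) (N : ℤ)
    (h0 : ∀ i : ℤ, i < N → A.coeff i = 0) (hN : A.coeff N ≠ 0) : A.order = N := by
  have hA : A ≠ 0 := fun h => hN (by simp [h])
  refine le_antisymm (HahnSeries.order_le_of_coeff_ne_zero hN) ?_
  by_contra h
  push_neg at h
  exact (HahnSeries.coeff_order_eq_zero.not.mpr hA) (h0 _ h)

/-- Let `R` be a commutative ring with no nontrivial idempotents.
If `A(h) · B(h) = 1` in `R((h))` with `A(h) = a₋N h^{-N} + (higher order terms)`,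
`B(h) = b₋M h^{-M} + (higher order terms)`, `a₋N ≠ 0`, `b₋M ≠ 0` and `N + M > 0`,
then `a₋N` is nilpotent. -/
theorem leading_coeff_nilpotent (R : Type*) [CommRing R]
    (hid : ∀ e : R, IsIdempotentElem e → e = 0 ∨ e = 1)
    (A B : LaurentSeries R) (N M : ℤ)
    (hA : ∀ i : ℤ, i < -N → A.coeff i = 0) (haN : A.coeff (-N) ≠ 0)
    (hB : ∀ i : ℤ, i < -M → B.coeff i = 0) (hbM : B.coeff (-M) ≠ 0)
    (hAB : A * B = 1) (hNM : 0 < N + M) :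
    IsNilpotent (A.coeff (-N)) := by
  set a := A.coeff (-N) with ha
  have hordA : A.order = -N := order_eq_of_coeff' A (-N) hA haN
  have hordB : B.order = -M := order_eq_of_coeff' B (-M) hB hbM
  -- product of leading coefficients is zero
  have hab : a * B.coeff (-M) = 0 := by
    have h1 := HahnSeries.coeff_mul_order_add_order A B
    rw [hAB, hordA, hordB, HahnSeries.leadingCoeff_eq, HahnSeries.leadingCoeff_eq,
      hordA, hordB] at h1
    have h2 : (-N) + (-M) ≠ (0 : ℤ) := by omega
    rw [HahnSeries.coeff_one, if_neg h2] at h1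
    exact h1.symm
  -- key per-prime equivalence
  have key : ∀ p : PrimeSpectrum R, a ∈ p.asIdeal ↔
      ∃ j ∈ Finset.Icc (-M) (N - 1), B.coeff j ∉ p.asIdeal := by
    intro p
    haveI hp : p.asIdeal.IsPrime := p.isPrime
    haveI : Nontrivial (R ⧸ p.asIdeal) := Ideal.Quotient.nontrivial_iff.mpr hp.ne_top
    set f : R →ₙ+* R ⧸ p.asIdeal := (Ideal.Quotient.mk p.asIdeal).toNonUnitalRingHom with hf
    have hfc : ∀ r : R, f r = Ideal.Quotient.mk p.asIdeal r := fun r => rfl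
    set Ab : LaurentSeries (R ⧸ p.asIdeal) := A.map f with hAb
    set Bb : LaurentSeries (R ⧸ p.asIdeal) := B.map f with hBb
    have hmul : Ab * Bb = 1 := by
      rw [hAb, hBb, ← HahnSeries.map_mul f, hAB]
      ext g
      simp only [HahnSeries.map_coeff, HahnSeries.coeff_one]
      split <;> simp [hfc]
    have hAbne : Ab ≠ 0 := left_ne_zero_of_mul_eq_one hmul
    have hBbne : Bb ≠ 0 := right_ne_zero_of_mul_eq_one hmul
    have hordsum : Ab.order + Bb.order = 0 := by
      rw [← HahnSeries.order_mul hAbne hBbne, hmul, HahnSeries.order_one]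
    have hcoeffA : ∀ i : ℤ, Ab.coeff i = Ideal.Quotient.mk p.asIdeal (A.coeff i) := by
      intro i; rfl
    have hcoeffB : ∀ i : ℤ, Bb.coeff i = Ideal.Quotient.mk p.asIdeal (B.coeff i) := by
      intro i; rfl
    constructor
    · intro hap
      -- order of Ab is > -N
      have hAbord : -N < Ab.order := by
        by_contra hle
        push_neg at hle
        have hne := (HahnSeries.coeff_order_eq_zero.not.mpr hAbne)
        rcases lt_or_eq_of_le hle with hlt | heq
        · exact hne (by rw [hcoeffA, hA _ hlt, map_zero])
        · exact hne (by rw [heq, hcoeffA, Ideal.Quotient.eq_zero_iff_mem.mpr hap])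
      refine ⟨Bb.order, ?_, ?_⟩
      · have hBlow : -M ≤ Bb.order := by
          by_contra hlt
          push_neg at hlt
          exact (HahnSeries.coeff_order_eq_zero.not.mpr hBbne)
            (by rw [hcoeffB, hB _ hlt, map_zero])
        rw [Finset.mem_Icc]
        omega
      · intro hmem
        exact (HahnSeries.coeff_order_eq_zero.not.mpr hBbne)
          (by rw [hcoeffB, Ideal.Quotient.eq_zero_iff_mem.mpr hmem])
    · rintro ⟨j, hj, hBj⟩
      rw [Finset.mem_Icc] at hj
      have hBjne : Bb.coeff j ≠ 0 := by
        rw [hcoeffB]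
        exact fun h => hBj (Ideal.Quotient.eq_zero_iff_mem.mp h)
      have hBord : Bb.order ≤ j := HahnSeries.order_le_of_coeff_ne_zero hBjne
      have : -N < Ab.order := by omega
      have := HahnSeries.coeff_eq_zero_of_lt_order this
      rw [hcoeffA] at this
      exact Ideal.Quotient.eq_zero_iff_mem.mp this
  -- the zero locus of a is clopen
  have hclopen : IsClopen (PrimeSpectrum.zeroLocus ({a} : Set R)) := by
    refine ⟨PrimeSpectrum.isClosed_zeroLocus _, ?_⟩
    have heq : PrimeSpectrum.zeroLocus ({a} : Set R) =
        ⋃ j ∈ Finset.Icc (-M) (N - 1),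
          (PrimeSpectrum.basicOpen (B.coeff j) : Set (PrimeSpectrum R)) := by
      ext p
      simp only [PrimeSpectrum.mem_zeroLocus, Set.singleton_subset_iff, SetLike.mem_coe,
        Set.mem_iUnion, PrimeSpectrum.basicOpen_eq_zeroLocus_compl]
      rw [key p]
      constructor
      · rintro ⟨j, hj, hBj⟩
        exact ⟨j, hj, by simp [PrimeSpectrum.mem_zeroLocus, hBj]⟩
      · rintro ⟨j, hj, hBj⟩
        refine ⟨j, hj, ?_⟩
        simp only [Set.mem_compl_iff, PrimeSpectrum.mem_zeroLocus,
          Set.singleton_subset_iff, SetLike.mem_coe] at hBj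
        exact hBj
    rw [heq]
    exact isOpen_biUnion fun j _ => (PrimeSpectrum.basicOpen _).isOpen
  obtain ⟨e, he, hbe⟩ := PrimeSpectrum.exists_idempotent_basicOpen_eq_of_isClopen hclopen
  rcases hid e he with rfl | rfl
  · -- zero locus empty: a is a unit, contradiction with a * b = 0
    exfalso
    rw [PrimeSpectrum.basicOpen_zero] at hbe
    have hunit : IsUnit a := by
      by_contra hu
      obtain ⟨mI, hmax, hmem⟩ := exists_max_ideal_of_mem_nonunits hu
      have hmemZL : (⟨mI, hmax.isPrime⟩ : PrimeSpectrum R) ∈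
          PrimeSpectrum.zeroLocus ({a} : Set R) := by
        simp [PrimeSpectrum.mem_zeroLocus, hmem]
      rw [hbe] at hmemZL
      simpa using hmemZL
    exact hbM ((hunit.mul_right_eq_zero).mp hab)
  · -- zero locus is everything: a is in every prime, hence nilpotent
    rw [PrimeSpectrum.basicOpen_one] at hbe
    rw [nilpotent_iff_mem_prime]
    intro J hJ
    have : (⟨J, hJ⟩ : PrimeSpectrum R) ∈ PrimeSpectrum.zeroLocus ({a} : Set R) := by
      rw [hbe]; trivial
    simpa [PrimeSpectrum.mem_zeroLocus] using this
end

section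
/- Let k be an algebraically closed field of characteristic p > 2, A₀ = k[x₁,y₁,…,x_n,y_n]/(xᵢ^p, yᵢ^p) with the standard Poisson bracket, and m its maximal ideal. Let g = m² viewed as a Lie algebra under the Poisson bracket. Then the derived subalgebra [g, g] equals the direct sum of the homogeneous components of degrees 2 through 2n(p−1) − 1; in particular [g, g] has codimension 1 in g. -/
open MvPolynomial

/-- The Poisson bracket `{f,g} = Σᵢ (∂f/∂yᵢ · ∂g/∂xᵢ − ∂f/∂xᵢ · ∂g/∂yᵢ)` on
`k[x₁,y₁,…,xₙ,yₙ]`, where `xᵢ = X (i,0)` and `yᵢ = X (i,1)`. -/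
noncomputable def poissonBracket {k : Type*} [CommRing k] {n : ℕ}
    (f g : MvPolynomial (Fin n × Fin 2) k) : MvPolynomial (Fin n × Fin 2) k :=
  ∑ i : Fin n,
    (pderiv (i, 1) f * pderiv (i, 0) g - pderiv (i, 0) f * pderiv (i, 1) g)

/-- The ideal `(x₁ᵖ, y₁ᵖ, …, xₙᵖ, yₙᵖ)`, so that `A₀` is the quotient by it. -/
noncomputable def truncationIdeal (k : Type*) [CommRing k] (p n : ℕ) :
    Ideal (MvPolynomial (Fin n × Fin 2) k) :=
  Ideal.span (Set.range fun s : Fin n × Fin 2 => (X s : MvPolynomial (Fin n × Fin 2) k) ^ p)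

namespace PBaux


/-- total degree of an exponent vector -/
def mdeg {σ : Type*} (d : σ →₀ ℕ) : ℕ := d.sum fun _ m => m

set_option linter.unusedSectionVars false

variable {σ : Type*} [DecidableEq σ]

lemma mdeg_eq_sum_univ [Fintype σ] (d : σ →₀ ℕ) : mdeg d = ∑ s, d s :=
  Finsupp.sum_fintype _ _ fun _ => rfl

lemma mdeg_add (a b : σ →₀ ℕ) : mdeg (a + b) = mdeg a + mdeg b :=
  Finsupp.sum_add_index' (fun _ => rfl) (fun _ _ _ => rfl)

lemma mdeg_single (s : σ) (m : ℕ) : mdeg (Finsupp.single s m) = m :=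
  Finsupp.sum_single_index rfl

lemma mdeg_eq_zero {d : σ →₀ ℕ} (h : mdeg d = 0) : d = 0 := by
  classical
  ext s
  by_cases hs : s ∈ d.support
  · exact Finset.sum_eq_zero_iff.mp (by simpa [mdeg, Finsupp.sum] using h) s hs
  · simpa using Finsupp.notMem_support_iff.mp hs

lemma exists_one_le {d : σ →₀ ℕ} (h : 1 ≤ mdeg d) : ∃ s, 1 ≤ d s := by
  by_contra hc
  push_neg at hc
  have h0 : d = 0 := by ext s; have := hc s; simp; omega
  rw [h0] at h
  simp [mdeg] at h

variable {k : Type*} [CommRing k]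

lemma coeff_pderiv (s : σ) (d : σ →₀ ℕ) (h : MvPolynomial σ k) :
    coeff d (pderiv s h) = ((d s + 1 : ℕ) : k) * coeff (d + Finsupp.single s 1) h := by
  induction h using MvPolynomial.induction_on' with
  | add f g hf hg => simp [map_add, hf, hg, mul_add]
  | monomial e a =>
    rw [pderiv_monomial]
    by_cases he : e = d + Finsupp.single s 1
    · subst he
      have h1 : d + Finsupp.single s 1 - Finsupp.single s 1 = d := by
        ext t; simp [Finsupp.single_apply]
      have h2 : ((d + Finsupp.single s 1 : σ →₀ ℕ)) s = d s + 1 := by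
        rw [Finsupp.add_apply, Finsupp.single_eq_same]
      simp [coeff_monomial, h1, h2, mul_comm]
    · have h1 : coeff d (monomial (e - Finsupp.single s 1) (a * (e s))) = 0 := by
        rw [coeff_monomial]
        split_ifs with hde
        · by_cases hes : e s = 0
          · simp [hes]
          · exfalso
            apply he
            have : Finsupp.single s 1 ≤ e := by
              rw [Finsupp.single_le_iff]; omega
            rw [← hde, tsub_add_cancel_of_le this]
        · rfl
      rw [h1, coeff_monomial, if_neg he, mul_zero]

lemma pderiv_comm' (s t : σ) (h : MvPolynomial σ k) :
    pderiv s (pderiv t h) = pderiv t (pderiv s h) := by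
  apply MvPolynomial.ext
  intro d
  rw [coeff_pderiv, coeff_pderiv, coeff_pderiv, coeff_pderiv]
  have hexp : d + Finsupp.single s 1 + Finsupp.single t 1
      = d + Finsupp.single t 1 + Finsupp.single s 1 := by
    rw [add_right_comm]
  rw [hexp]
  ring_nf
  rcases eq_or_ne s t with rfl | hst
  · ring
  · have h1 : ((d + Finsupp.single s 1 : σ →₀ ℕ)) t = d t := by
      simp [Finsupp.single_apply, hst]
    have h2 : ((d + Finsupp.single t 1 : σ →₀ ℕ)) s = d s := by
      simp [Finsupp.single_apply, Ne.symm hst]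
    rw [h1, h2]; ring


lemma constcoeff_of_mem {f : MvPolynomial σ k}
    (hf : f ∈ Ideal.span (Set.range (X : σ → MvPolynomial σ k))) : coeff 0 f = 0 := by
  have hle : Ideal.span (Set.range (X : σ → MvPolynomial σ k)) ≤
      RingHom.ker (constantCoeff : MvPolynomial σ k →+* k) := by
    rw [Ideal.span_le]
    rintro _ ⟨s, rfl⟩
    simp [RingHom.mem_ker]
  have := hle hf
  rwa [RingHom.mem_ker, constantCoeff_eq] at this

lemma coeff_mul_lowdeg {a b : MvPolynomial σ k} (ha : coeff 0 a = 0) (hb : coeff 0 b = 0)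
    {d : σ →₀ ℕ} (hd : mdeg d ≤ 1) : coeff d (a * b) = 0 := by
  rw [coeff_mul]
  apply Finset.sum_eq_zero
  rintro ⟨u, v⟩ huv
  rw [Finset.HasAntidiagonal.mem_antidiagonal] at huv
  have hsum : mdeg u + mdeg v ≤ 1 := by rw [← mdeg_add, huv]; exact hd
  have h01 : mdeg u = 0 ∨ mdeg v = 0 := by omega
  rcases h01 with h | h
  · rw [mdeg_eq_zero h, ha, zero_mul]
  · rw [mdeg_eq_zero h, hb, mul_zero]

lemma coeff_sq_lowdeg {f : MvPolynomial σ k}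
    (hf : f ∈ (Ideal.span (Set.range (X : σ → MvPolynomial σ k))) ^ 2)
    {d : σ →₀ ℕ} (hd : mdeg d ≤ 1) : coeff d f = 0 := by
  rw [sq] at hf
  refine Submodule.mul_induction_on hf ?_ ?_
  · intro a ha b hb
    exact coeff_mul_lowdeg (constcoeff_of_mem ha) (constcoeff_of_mem hb) hd
  · intro x y hx hy
    rw [coeff_add, hx, hy, add_zero]


section Specialized

variable {n p : ℕ}

lemma divergence (f g : MvPolynomial (Fin n × Fin 2) k) :
    poissonBracket f g = ∑ i : Fin n,
      (pderiv (i, 1) (f * pderiv (i, 0) g) - pderiv (i, 0) (f * pderiv (i, 1) g)) := by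
  unfold poissonBracket
  refine Finset.sum_congr rfl fun i _ => ?_
  rw [pderiv_mul, pderiv_mul, pderiv_comm' (i,0) (i,1) g]
  ring

lemma bracket_lowdeg {f g : MvPolynomial (Fin n × Fin 2) k}
    (hf : f ∈ (Ideal.span (Set.range (X : Fin n × Fin 2 → MvPolynomial (Fin n × Fin 2) k))) ^ 2)
    (hg : g ∈ (Ideal.span (Set.range (X : Fin n × Fin 2 → MvPolynomial (Fin n × Fin 2) k))) ^ 2)
    {d : (Fin n × Fin 2) →₀ ℕ} (hd : mdeg d ≤ 1) :
    coeff d (poissonBracket f g) = 0 := by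
  have hcc : ∀ (s : Fin n × Fin 2) (h : MvPolynomial (Fin n × Fin 2) k),
      h ∈ (Ideal.span (Set.range (X : Fin n × Fin 2 → MvPolynomial (Fin n × Fin 2) k))) ^ 2 →
      coeff 0 (pderiv s h) = 0 := by
    intro s h hh
    rw [coeff_pderiv]
    have : mdeg (0 + Finsupp.single s 1 : (Fin n × Fin 2) →₀ ℕ) ≤ 1 := by
      rw [zero_add, mdeg_single]
    rw [coeff_sq_lowdeg hh this, mul_zero]
  unfold poissonBracket
  rw [coeff_sum]
  apply Finset.sum_eq_zero
  intro i _
  rw [coeff_sub,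
    coeff_mul_lowdeg (hcc _ _ hf) (hcc _ _ hg) hd,
    coeff_mul_lowdeg (hcc _ _ hf) (hcc _ _ hg) hd, sub_zero]

/-- top exponent vector: every coordinate `p - 1`. -/
noncomputable def topExp (p : ℕ) (n : ℕ) : (Fin n × Fin 2) →₀ ℕ :=
  Finsupp.equivFunOnFinite.symm (fun _ => p - 1)

@[simp] lemma topExp_apply (s : Fin n × Fin 2) : topExp p n s = p - 1 := rfl

lemma bracket_topcoeff [CharP k p] (hp : 0 < p) (f g : MvPolynomial (Fin n × Fin 2) k) :
    coeff (topExp p n) (poissonBracket f g) = 0 := by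
  rw [divergence, coeff_sum]
  apply Finset.sum_eq_zero
  intro i _
  have hz : ∀ (s : Fin n × Fin 2) (h : MvPolynomial (Fin n × Fin 2) k),
      coeff (topExp p n) (pderiv s h) = 0 := by
    intro s h
    rw [coeff_pderiv]
    have : ((topExp p n s + 1 : ℕ) : k) = 0 := by
      rw [topExp_apply]
      have : p - 1 + 1 = p := by omega
      rw [this, CharP.cast_eq_zero]
    rw [this, zero_mul]
  rw [coeff_sub, hz, hz, sub_zero]


lemma pderiv_monomial_mul (s t : Fin n × Fin 2) (u e : (Fin n × Fin 2) →₀ ℕ) :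
    pderiv s (monomial u (1:k)) * pderiv t (monomial e (1:k)) =
      monomial (u + e - (Finsupp.single s 1 + Finsupp.single t 1)) ((u s * e t : ℕ) : k) := by
  rw [pderiv_monomial, pderiv_monomial, monomial_mul, one_mul, one_mul]
  push_cast
  by_cases hu : u s = 0
  · rw [hu]; simp
  by_cases he : e t = 0
  · rw [he]; simp
  have h1 : 1 ≤ u s := Nat.one_le_iff_ne_zero.mpr hu
  have h2 : 1 ≤ e t := Nat.one_le_iff_ne_zero.mpr he
  have hE : (u - Finsupp.single s 1) + (e - Finsupp.single t 1)
      = u + e - (Finsupp.single s 1 + Finsupp.single t 1) :=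
    tsub_add_tsub_comm (Finsupp.single_le_iff.mpr h1) (Finsupp.single_le_iff.mpr h2)
  rw [hE]

lemma bracket_monomial (u e : (Fin n × Fin 2) →₀ ℕ) :
    poissonBracket (monomial u (1:k)) (monomial e (1:k)) =
      ∑ i : Fin n,
        monomial (u + e - (Finsupp.single (i,1) 1 + Finsupp.single (i,0) 1))
          ((↑(u (i,1) * e (i,0)) - ↑(u (i,0) * e (i,1)) : k)) := by
  unfold poissonBracket
  refine Finset.sum_congr rfl fun i _ => ?_
  rw [pderiv_monomial_mul, pderiv_monomial_mul]
  have hcomm : Finsupp.single ((i,(0:Fin 2)) : Fin n × Fin 2) 1 + Finsupp.single (i,(1:Fin 2)) 1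
      = Finsupp.single ((i,(1:Fin 2)) : Fin n × Fin 2) 1 + Finsupp.single (i,(0:Fin 2)) 1 :=
    add_comm _ _
  rw [hcomm, ← map_sub]

lemma monomial_mem_truncation {d : (Fin n × Fin 2) →₀ ℕ} {s : Fin n × Fin 2}
    (hs : p ≤ d s) (c : k) : monomial d c ∈ truncationIdeal k p n := by
  have key : monomial d c = (X s ^ p) * monomial (d - Finsupp.single s p) c := by
    rw [X_pow_eq_monomial, monomial_mul, one_mul]
    have hE : d = Finsupp.single s p + (d - Finsupp.single s p) :=
      (add_tsub_cancel_of_le (Finsupp.single_le_iff.mpr hs)).symm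
    exact congrFun (congrArg _ (congrArg _ hE)) c
  rw [key]
  exact Ideal.mul_mem_right _ _ (Ideal.subset_span ⟨s, rfl⟩)

lemma monomial_mem_sq {d : (Fin n × Fin 2) →₀ ℕ} (hd : 2 ≤ mdeg d) (c : k) :
    monomial d c ∈
      (Ideal.span (Set.range (X : Fin n × Fin 2 → MvPolynomial (Fin n × Fin 2) k))) ^ 2 := by
  obtain ⟨s, hs⟩ := exists_one_le (d := d) (by omega)
  have hle : Finsupp.single s 1 ≤ d := Finsupp.single_le_iff.mpr hs
  have h2 : 1 ≤ mdeg (d - Finsupp.single s 1) := by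
    have h3 := mdeg_add (d - Finsupp.single s 1) (Finsupp.single s 1)
    rw [tsub_add_cancel_of_le hle, mdeg_single] at h3
    omega
  obtain ⟨t, ht⟩ := exists_one_le h2
  have hle2 : Finsupp.single t 1 ≤ d - Finsupp.single s 1 := Finsupp.single_le_iff.mpr ht
  have hX : ∀ a : Fin n × Fin 2, (X a : MvPolynomial (Fin n × Fin 2) k)
      = monomial (Finsupp.single a 1) 1 := fun a => by rw [← pow_one (X a), X_pow_eq_monomial]
  have key : monomial d c
      = (X s * X t) * monomial (d - Finsupp.single s 1 - Finsupp.single t 1) c := by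
    rw [hX, hX, monomial_mul, monomial_mul, one_mul, one_mul]
    have hE : d = Finsupp.single s 1 + Finsupp.single t 1
        + (d - Finsupp.single s 1 - Finsupp.single t 1) := by
      rw [add_assoc, add_tsub_cancel_of_le hle2, add_tsub_cancel_of_le hle]
    exact congrFun (congrArg _ (congrArg _ hE)) c
  rw [key]
  refine Ideal.mul_mem_right _ _ ?_
  rw [sq]
  exact Ideal.mul_mem_mul (Ideal.subset_span ⟨s, rfl⟩) (Ideal.subset_span ⟨t, rfl⟩)


lemma pne_fst {i b : Fin n} (h : i ≠ b) (x y : Fin 2) :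
    ((i,x) : Fin n × Fin 2) ≠ (b,y) := by simp [Prod.ext_iff, h]

lemma pne_snd (i b : Fin n) {x y : Fin 2} (h : x ≠ y) :
    ((i,x) : Fin n × Fin 2) ≠ (b,y) := by
  simp only [ne_eq, Prod.mk.injEq, not_and]
  exact fun _ => h

lemma pair_single_le {d : (Fin n × Fin 2) →₀ ℕ} {a b : Fin n × Fin 2} (hab : a ≠ b)
    (ha : 1 ≤ d a) (hb : 1 ≤ d b) :
    Finsupp.single a 1 + Finsupp.single b 1 ≤ d := by
  rw [Finsupp.le_def]
  intro c
  rw [Finsupp.add_apply]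
  rcases eq_or_ne a c with rfl | hac
  · rw [Finsupp.single_eq_same, Finsupp.single_eq_of_ne' (fun h => hab h.symm)]
    omega
  · rw [Finsupp.single_eq_of_ne' hac]
    rcases eq_or_ne b c with rfl | hbc
    · rw [Finsupp.single_eq_same]; omega
    · rw [Finsupp.single_eq_of_ne' hbc]; omega

lemma mk_smul {k : Type*} [CommSemiring k] {A : Type*} [CommRing A] [Algebra k A]
    (I : Ideal A) (c : k) (x : A) :
    Ideal.Quotient.mk I (c • x) = c • Ideal.Quotient.mk I x := by
  rw [← Ideal.Quotient.mkₐ_eq_mk (R₁ := k), map_smul]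

/-- The set of images of Poisson brackets of elements of `M²`. -/
def genSet (k : Type*) [CommRing k] (p n : ℕ) :
    Set (MvPolynomial (Fin n × Fin 2) k ⧸ truncationIdeal k p n) :=
  {z : MvPolynomial (Fin n × Fin 2) k ⧸ truncationIdeal k p n |
    ∃ f g : MvPolynomial (Fin n × Fin 2) k,
      f ∈ (Ideal.span (Set.range (X : Fin n × Fin 2 → MvPolynomial (Fin n × Fin 2) k))) ^ 2 ∧
      g ∈ (Ideal.span (Set.range (X : Fin n × Fin 2 → MvPolynomial (Fin n × Fin 2) k))) ^ 2 ∧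
      z = Ideal.Quotient.mk (truncationIdeal k p n) (poissonBracket f g)}

section FieldLemmas

variable {k : Type*} [Field k] [CharP k p] (hp : 2 < p)

include hp

lemma lemA (i : Fin n) (d : (Fin n × Fin 2) →₀ ℕ) (hne : d (i,0) ≠ d (i,1))
    (hle : ∀ s, d s ≤ p - 1) (h2 : 2 ≤ mdeg d) :
    Ideal.Quotient.mk (truncationIdeal k p n) (monomial d (1:k)) ∈
      Submodule.span k (genSet k p n) := by
  classical
  set u : (Fin n × Fin 2) →₀ ℕ := Finsupp.single (i,0) 1 + Finsupp.single (i,1) 1 with hu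
  have hu10 : u (i,1) = 1 := by
    rw [hu, Finsupp.add_apply, Finsupp.single_eq_of_ne' (pne_snd i i (by decide)),
      Finsupp.single_eq_same]
  have hu00 : u (i,0) = 1 := by
    rw [hu, Finsupp.add_apply, Finsupp.single_eq_same,
      Finsupp.single_eq_of_ne' (pne_snd i i (by decide))]
    rfl
  have hbr : poissonBracket (monomial u (1:k)) (monomial d (1:k))
      = monomial d ((d (i,0) : k) - (d (i,1) : k)) := by
    rw [bracket_monomial]
    rw [Finset.sum_eq_single_of_mem i (Finset.mem_univ i)]
    · have hE : u + d - (Finsupp.single ((i,(1:Fin 2)):Fin n × Fin 2) 1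
          + Finsupp.single (i,(0:Fin 2)) 1) = d := by
        rw [hu, add_comm (Finsupp.single ((i,(1:Fin 2)):Fin n × Fin 2) 1), add_tsub_cancel_left]
      rw [hE, hu10, hu00, one_mul, one_mul]
    · intro b _ hbi
      have h1 : u (b,1) = 0 := by
        rw [hu, Finsupp.add_apply, Finsupp.single_eq_of_ne' (pne_fst hbi.symm _ _),
          Finsupp.single_eq_of_ne' (pne_fst hbi.symm _ _)]
        rfl
      have h0 : u (b,0) = 0 := by
        rw [hu, Finsupp.add_apply, Finsupp.single_eq_of_ne' (pne_fst hbi.symm _ _),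
          Finsupp.single_eq_of_ne' (pne_fst hbi.symm _ _)]
        rfl
      rw [h1, h0, zero_mul, zero_mul, Nat.cast_zero, sub_zero, monomial_zero]
  set c : k := (d (i,0) : k) - (d (i,1) : k) with hc
  have hcne : c ≠ 0 := by
    rw [hc, sub_ne_zero]
    intro hcast
    exact hne (CharP.natCast_injOn_Iio k p
      (by simp only [Set.mem_Iio]; have := hle (i,0); omega)
      (by simp only [Set.mem_Iio]; have := hle (i,1); omega) hcast)
  have hmon : monomial d (1:k) = c⁻¹ • monomial d c := by
    rw [smul_monomial, smul_eq_mul, inv_mul_cancel₀ hcne]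
  rw [hmon, mk_smul]
  refine Submodule.smul_mem _ _ (Submodule.subset_span ?_)
  refine ⟨monomial u 1, monomial d 1, monomial_mem_sq ?_ 1, monomial_mem_sq h2 1, ?_⟩
  · rw [hu, mdeg_add, mdeg_single, mdeg_single]
  · rw [hbr]

lemma lemB (i : Fin n) (d : (Fin n × Fin 2) →₀ ℕ) (h0 : 1 ≤ d (i,0))
    (h1 : d (i,1) ≤ p - 2) (h2 : 2 ≤ mdeg d) :
    Ideal.Quotient.mk (truncationIdeal k p n) (monomial d (1:k)) ∈
      Submodule.span k (genSet k p n) := by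
  classical
  set u : (Fin n × Fin 2) →₀ ℕ := Finsupp.single (i,0) 2 with hu
  set e : (Fin n × Fin 2) →₀ ℕ := d + Finsupp.single (i,1) 1 - Finsupp.single (i,0) 1 with he
  have hle0 : Finsupp.single ((i,(0:Fin 2)):Fin n × Fin 2) 1 ≤ d :=
    Finsupp.single_le_iff.mpr h0
  have hcancel : e + Finsupp.single ((i,(0:Fin 2)):Fin n × Fin 2) 1
      = d + Finsupp.single (i,1) 1 := by
    rw [he]
    exact tsub_add_cancel_of_le (le_trans hle0 le_self_add)
  have he1 : e (i,1) = d (i,1) + 1 := by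
    have h' := DFunLike.congr_fun hcancel ((i,(1:Fin 2)) : Fin n × Fin 2)
    rw [Finsupp.add_apply, Finsupp.add_apply,
      Finsupp.single_eq_of_ne' (pne_snd i i (by decide)),
      Finsupp.single_eq_same] at h'
    omega
  have hu1 : u (i,1) = 0 := by
    rw [hu, Finsupp.single_eq_of_ne' (pne_snd i i (by decide))]
  have hu0 : u (i,0) = 2 := by rw [hu, Finsupp.single_eq_same]
  have hbr : poissonBracket (monomial u (1:k)) (monomial e (1:k))
      = monomial d (-(((2 * (d (i,1) + 1) : ℕ)) : k)) := by
    rw [bracket_monomial]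
    rw [Finset.sum_eq_single_of_mem i (Finset.mem_univ i)]
    · have hE : u + e - (Finsupp.single ((i,(1:Fin 2)):Fin n × Fin 2) 1
          + Finsupp.single (i,(0:Fin 2)) 1) = d := by
        have hstep : u + e = d + (Finsupp.single ((i,(1:Fin 2)):Fin n × Fin 2) 1
            + Finsupp.single (i,(0:Fin 2)) 1) := by
          have h2eq : (Finsupp.single ((i,(0:Fin 2)):Fin n × Fin 2) 2 : (Fin n × Fin 2) →₀ ℕ)
              = Finsupp.single (i,0) 1 + Finsupp.single (i,0) 1 := Finsupp.single_add _ 1 1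
          rw [hu, h2eq, add_assoc,
            add_comm (Finsupp.single ((i,(0:Fin 2)):Fin n × Fin 2) 1) e, hcancel]
          rw [add_comm (Finsupp.single ((i,(0:Fin 2)):Fin n × Fin 2) 1)
            (d + Finsupp.single (i,1) 1), add_assoc]
        rw [hstep, add_tsub_cancel_right]
      rw [hE, hu1, hu0, zero_mul, Nat.cast_zero, zero_sub, he1]
    · intro b _ hbi
      have h1' : u (b,1) = 0 := by
        rw [hu, Finsupp.single_eq_of_ne' (pne_fst hbi.symm _ _)]
      have h0' : u (b,0) = 0 := by
        rw [hu, Finsupp.single_eq_of_ne' (pne_fst hbi.symm _ _)]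
      rw [h1', h0', zero_mul, zero_mul, Nat.cast_zero, sub_zero, monomial_zero]
  set c : k := -(((2 * (d (i,1) + 1) : ℕ)) : k) with hc
  have hpprime : p.Prime := by
    rcases CharP.char_is_prime_or_zero k p with h | h
    · exact h
    · omega
  have hcne : c ≠ 0 := by
    rw [hc, neg_ne_zero, Ne, CharP.cast_eq_zero_iff k p]
    intro hdvd
    rcases (Nat.Prime.dvd_mul hpprime).mp hdvd with h | h
    · have := Nat.le_of_dvd (by omega) h; omega
    · have := Nat.le_of_dvd (by omega) h; omega
  have hmdeg_e : mdeg e = mdeg d := by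
    have := congrArg mdeg hcancel
    rw [mdeg_add, mdeg_add, mdeg_single, mdeg_single] at this
    omega
  have hmon : monomial d (1:k) = c⁻¹ • monomial d c := by
    rw [smul_monomial, smul_eq_mul, inv_mul_cancel₀ hcne]
  rw [hmon, mk_smul]
  refine Submodule.smul_mem _ _ (Submodule.subset_span ?_)
  refine ⟨monomial u 1, monomial e 1, monomial_mem_sq ?_ 1,
    monomial_mem_sq (by omega) 1, ?_⟩
  · rw [hu, mdeg_single]
  · rw [hbr]


lemma lemC (i j : Fin n) (hij : i ≠ j) (d : (Fin n × Fin 2) →₀ ℕ)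
    (hi0 : d (i,0) = p - 1) (hi1 : d (i,1) = p - 1)
    (hj0 : d (j,0) = 0) (hj1 : d (j,1) = 0) (h2 : 2 ≤ mdeg d) :
    Ideal.Quotient.mk (truncationIdeal k p n) (monomial d (1:k)) ∈
      Submodule.span k (genSet k p n) := by
  classical
  set u : (Fin n × Fin 2) →₀ ℕ := Finsupp.single (j,0) 1 + Finsupp.single (i,1) 1 with hu
  set e : (Fin n × Fin 2) →₀ ℕ := d + Finsupp.single (j,1) 1 - Finsupp.single (i,1) 1 with he
  set d2 : (Fin n × Fin 2) →₀ ℕ :=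
    d + (Finsupp.single (j,1) 1 + Finsupp.single (j,0) 1)
      - (Finsupp.single (i,1) 1 + Finsupp.single (i,0) 1) with hd2
  have hle_i1 : Finsupp.single ((i,(1:Fin 2)):Fin n × Fin 2) 1 ≤ d :=
    Finsupp.single_le_iff.mpr (by omega)
  have hcancel : e + Finsupp.single ((i,(1:Fin 2)):Fin n × Fin 2) 1
      = d + Finsupp.single (j,1) 1 := by
    rw [he]
    exact tsub_add_cancel_of_le (le_trans hle_i1 le_self_add)
  -- values of u
  have hu_i1 : u (i,1) = 1 := by
    rw [hu, Finsupp.add_apply, Finsupp.single_eq_of_ne' (pne_fst (Ne.symm hij) _ _),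
      Finsupp.single_eq_same]
  have hu_i0 : u (i,0) = 0 := by
    rw [hu, Finsupp.add_apply, Finsupp.single_eq_of_ne' (pne_fst (Ne.symm hij) _ _),
      Finsupp.single_eq_of_ne' (pne_snd i i (by decide))]
    rfl
  have hu_j1 : u (j,1) = 0 := by
    rw [hu, Finsupp.add_apply, Finsupp.single_eq_of_ne' (pne_snd j j (by decide)),
      Finsupp.single_eq_of_ne' (pne_fst hij _ _)]
    rfl
  have hu_j0 : u (j,0) = 1 := by
    rw [hu, Finsupp.add_apply, Finsupp.single_eq_same,
      Finsupp.single_eq_of_ne' (pne_fst hij _ _)]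
    rfl
  -- values of e
  have he_i0 : e (i,0) = p - 1 := by
    rw [he, Finsupp.tsub_apply, Finsupp.add_apply,
      Finsupp.single_eq_of_ne' (pne_fst (Ne.symm hij) _ _),
      Finsupp.single_eq_of_ne' (pne_snd i i (by decide))]
    omega
  have he_j1 : e (j,1) = 1 := by
    rw [he, Finsupp.tsub_apply, Finsupp.add_apply, Finsupp.single_eq_same,
      Finsupp.single_eq_of_ne' (pne_fst hij _ _)]
    omega
  -- key sum identity
  have hue : u + e = d + (Finsupp.single ((j,(1:Fin 2)):Fin n × Fin 2) 1
      + Finsupp.single (j,0) 1) := by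
    rw [hu, add_assoc, add_comm (Finsupp.single ((i,(1:Fin 2)):Fin n × Fin 2) 1) e, hcancel]
    abel
  -- the two exponents appearing in the bracket
  have hEj : u + e - (Finsupp.single ((j,(1:Fin 2)):Fin n × Fin 2) 1
      + Finsupp.single (j,0) 1) = d := by
    rw [hue, add_tsub_cancel_right]
  have hEi : u + e - (Finsupp.single ((i,(1:Fin 2)):Fin n × Fin 2) 1
      + Finsupp.single (i,0) 1) = d2 := by
    rw [hue, hd2]
  -- the bracket evaluates to (p-1)•m_{d2} - m_d
  have hbr : poissonBracket (monomial u (1:k)) (monomial e (1:k))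
      = monomial d2 ((p - 1 : ℕ) : k) + monomial d (-1 : k) := by
    rw [bracket_monomial]
    have hzero : ∀ b ∈ Finset.univ, b ∉ ({i, j} : Finset (Fin n)) →
        monomial (u + e - (Finsupp.single ((b,(1:Fin 2)):Fin n × Fin 2) 1
            + Finsupp.single (b,0) 1))
          ((↑(u (b,1) * e (b,0)) - ↑(u (b,0) * e (b,1)) : k)) = 0 := by
      intro b _ hb
      rw [Finset.mem_insert, Finset.mem_singleton] at hb
      push_neg at hb
      have h1' : u (b,1) = 0 := by
        rw [hu, Finsupp.add_apply, Finsupp.single_eq_of_ne' (pne_fst (Ne.symm hb.2) _ _),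
          Finsupp.single_eq_of_ne' (pne_fst (Ne.symm hb.1) _ _)]
        rfl
      have h0' : u (b,0) = 0 := by
        rw [hu, Finsupp.add_apply, Finsupp.single_eq_of_ne' (pne_fst (Ne.symm hb.2) _ _),
          Finsupp.single_eq_of_ne' (pne_fst (Ne.symm hb.1) _ _)]
        rfl
      rw [h1', h0', zero_mul, zero_mul, Nat.cast_zero, sub_zero, monomial_zero]
    rw [← Finset.sum_subset (Finset.subset_univ ({i, j} : Finset (Fin n))) hzero,
      Finset.sum_pair hij]
    rw [hEi, hEj, hu_i1, hu_i0, hu_j1, hu_j0, he_i0, he_j1]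
    rw [one_mul, zero_mul, one_mul, zero_mul, Nat.cast_zero, sub_zero, zero_sub]
    norm_num
  -- facts about d2
  have hle_pair_i : Finsupp.single ((i,(1:Fin 2)):Fin n × Fin 2) 1
      + Finsupp.single (i,0) 1 ≤ d :=
    pair_single_le (pne_snd i i (by decide)) (by omega) (by omega)
  have hcancel2 : d2 + (Finsupp.single ((i,(1:Fin 2)):Fin n × Fin 2) 1
      + Finsupp.single (i,0) 1)
      = d + (Finsupp.single ((j,(1:Fin 2)):Fin n × Fin 2) 1 + Finsupp.single (j,0) 1) := by
    rw [hd2]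
    exact tsub_add_cancel_of_le (le_trans hle_pair_i le_self_add)
  have hd2_j0 : d2 (j,0) = 1 := by
    have h' := DFunLike.congr_fun hcancel2 ((j,(0:Fin 2)) : Fin n × Fin 2)
    rw [Finsupp.add_apply, Finsupp.add_apply, Finsupp.add_apply, Finsupp.add_apply,
      Finsupp.single_eq_of_ne' (pne_fst hij _ _),
      Finsupp.single_eq_of_ne' (pne_fst hij _ _),
      Finsupp.single_eq_of_ne' (pne_snd j j (by decide)),
      Finsupp.single_eq_same] at h'
    omega
  have hd2_j1 : d2 (j,1) = 1 := by
    have h' := DFunLike.congr_fun hcancel2 ((j,(1:Fin 2)) : Fin n × Fin 2)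
    rw [Finsupp.add_apply, Finsupp.add_apply, Finsupp.add_apply, Finsupp.add_apply,
      Finsupp.single_eq_of_ne' (pne_fst hij _ _),
      Finsupp.single_eq_of_ne' (pne_fst hij _ _),
      Finsupp.single_eq_same,
      Finsupp.single_eq_of_ne' (pne_snd j j (by decide))] at h'
    omega
  have hmdeg_d2 : mdeg d2 = mdeg d := by
    have h' := congrArg mdeg hcancel2
    rw [mdeg_add, mdeg_add, mdeg_add, mdeg_add, mdeg_single, mdeg_single,
      mdeg_single, mdeg_single] at h'
    omega
  have hmdeg_e : mdeg e = mdeg d := by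
    have h' := congrArg mdeg hcancel
    rw [mdeg_add, mdeg_add, mdeg_single, mdeg_single] at h'
    omega
  -- membership of the bracket image in the span
  have hbr_mem : Ideal.Quotient.mk (truncationIdeal k p n)
      (poissonBracket (monomial u (1:k)) (monomial e (1:k))) ∈
      Submodule.span k (genSet k p n) :=
    Submodule.subset_span ⟨monomial u 1, monomial e 1,
      monomial_mem_sq (by rw [hu, mdeg_add, mdeg_single, mdeg_single]) 1,
      monomial_mem_sq (by omega) 1, rfl⟩
  -- membership of m_{d2}
  have hd2_mem : Ideal.Quotient.mk (truncationIdeal k p n) (monomial d2 (1:k)) ∈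
      Submodule.span k (genSet k p n) :=
    lemB hp j d2 (by omega) (by omega) (by omega)
  -- combine: m_d = (p-1) • m_{d2} - bracket
  have hkey : monomial d (1:k) = ((p - 1 : ℕ) : k) • monomial d2 (1:k)
      - poissonBracket (monomial u (1:k)) (monomial e (1:k)) := by
    rw [hbr, smul_monomial, smul_eq_mul, mul_one]
    rw [sub_add_eq_sub_sub, sub_self, zero_sub]
    norm_num
  rw [hkey, map_sub, mk_smul]
  exact Submodule.sub_mem _ (Submodule.smul_mem _ _ hd2_mem) hbr_mem


/-- The set of images of admissible monomials. -/
def monSet (k : Type*) [CommRing k] (p n : ℕ) :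
    Set (MvPolynomial (Fin n × Fin 2) k ⧸ truncationIdeal k p n) :=
  {z : MvPolynomial (Fin n × Fin 2) k ⧸ truncationIdeal k p n |
    ∃ d : (Fin n × Fin 2) →₀ ℕ, (∀ s, d s ≤ p - 1) ∧
      2 ≤ (d.sum fun _ m => m) ∧ (d.sum fun _ m => m) ≤ 2 * n * (p - 1) - 1 ∧
      z = Ideal.Quotient.mk (truncationIdeal k p n) (monomial d (1 : k))}

lemma dir1 (f g : MvPolynomial (Fin n × Fin 2) k)
    (hf : f ∈ (Ideal.span (Set.range (X : Fin n × Fin 2 → MvPolynomial (Fin n × Fin 2) k))) ^ 2)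
    (hg : g ∈ (Ideal.span (Set.range (X : Fin n × Fin 2 → MvPolynomial (Fin n × Fin 2) k))) ^ 2) :
    Ideal.Quotient.mk (truncationIdeal k p n) (poissonBracket f g) ∈
      Submodule.span k (monSet k p n) := by
  classical
  have hconst : (∑ _s : Fin n × Fin 2, (p-1)) = 2 * n * (p - 1) := by
    rw [Finset.sum_const, Finset.card_univ, Fintype.card_prod, Fintype.card_fin,
      Fintype.card_fin, smul_eq_mul]
    ring
  rw [MvPolynomial.as_sum (poissonBracket f g), map_sum]
  apply Submodule.sum_mem
  intro d hd
  have hc : coeff d (poissonBracket f g) ≠ 0 := mem_support_iff.mp hd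
  by_cases hbig : ∀ s : Fin n × Fin 2, d s ≤ p - 1
  · have hd2 : 2 ≤ mdeg d := by
      by_contra hlt
      push_neg at hlt
      exact hc (bracket_lowdeg hf hg (by omega))
    have hub2 : mdeg d ≤ 2 * n * (p-1) := by
      rw [mdeg_eq_sum_univ, ← hconst]
      exact Finset.sum_le_sum fun s _ => hbig s
    have hne_top : mdeg d ≠ 2 * n * (p-1) := by
      intro hEq
      have hsum_eq : (∑ s, d s) = ∑ _s : Fin n × Fin 2, (p-1) := by
        rw [← mdeg_eq_sum_univ, hEq, hconst]
      have hall := (Finset.sum_eq_sum_iff_of_le (fun s _ => hbig s)).mp hsum_eq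
      have hdT : d = topExp p n := by
        ext s
        rw [topExp_apply]
        exact hall s (Finset.mem_univ s)
      rw [hdT] at hc
      exact hc (bracket_topcoeff (by omega) f g)
    have hub : mdeg d ≤ 2 * n * (p-1) - 1 := by omega
    have hmono : monomial d (coeff d (poissonBracket f g))
        = (coeff d (poissonBracket f g)) • monomial d (1:k) := by
      rw [smul_monomial, smul_eq_mul, mul_one]
    rw [hmono, mk_smul]
    exact Submodule.smul_mem _ _ (Submodule.subset_span ⟨d, hbig, hd2, hub, rfl⟩)
  · push_neg at hbig
    obtain ⟨s, hs⟩ := hbig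
    have hps : p ≤ d s := by omega
    rw [Ideal.Quotient.eq_zero_iff_mem.mpr (monomial_mem_truncation hps _)]
    exact Submodule.zero_mem _

lemma dir2 (d : (Fin n × Fin 2) →₀ ℕ) (hle : ∀ s, d s ≤ p - 1)
    (h2 : 2 ≤ mdeg d) (hub : mdeg d ≤ 2 * n * (p - 1) - 1) :
    Ideal.Quotient.mk (truncationIdeal k p n) (monomial d (1:k)) ∈
      Submodule.span k (genSet k p n) := by
  by_cases hA : ∃ i : Fin n, d (i,0) ≠ d (i,1)
  · obtain ⟨i, hi⟩ := hA
    exact lemA hp i d hi hle h2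
  push_neg at hA
  by_cases hB : ∃ i : Fin n, 1 ≤ d (i,0) ∧ d (i,0) ≤ p - 2
  · obtain ⟨i, hi1, hi2⟩ := hB
    exact lemB hp i d hi1 (by rw [← hA i]; omega) h2
  push_neg at hB
  have hvals : ∀ i : Fin n, d (i,0) = 0 ∨ d (i,0) = p - 1 := by
    intro i
    have hB' := hB i
    have := hle (i,0)
    omega
  obtain ⟨⟨m, b⟩, hs0⟩ := exists_one_le (d := d) (by omega)
  have hm0 : 1 ≤ d (m, 0) := by
    fin_cases b
    · exact hs0
    · rw [hA m]; exact hs0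
  have hm : d (m,0) = p - 1 := by
    rcases hvals m with h | h
    · omega
    · exact h
  have hexj : ∃ jj : Fin n, d (jj,0) = 0 := by
    by_contra hcj
    push_neg at hcj
    have hall : ∀ i : Fin n, d (i,0) = p - 1 := fun i => (hvals i).resolve_left (hcj i)
    have hinner : ∀ m' : Fin n, (∑ b : Fin 2, d (m', b)) = (p-1) + (p-1) := by
      intro m'
      rw [Fin.sum_univ_two]
      have h1' := hall m'
      have h2' := hA m'
      omega
    have hsum : mdeg d = n * ((p-1) + (p-1)) := by
      calc mdeg d = ∑ m' : Fin n, ∑ b : Fin 2, d (m', b) := by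
            rw [mdeg_eq_sum_univ, Fintype.sum_prod_type]
        _ = ∑ _m' : Fin n, ((p-1) + (p-1)) :=
            Finset.sum_congr rfl (fun m' _ => hinner m')
        _ = n * ((p-1)+(p-1)) := by
            rw [Finset.sum_const, Finset.card_univ, Fintype.card_fin, smul_eq_mul]
    have hlin : n * ((p-1)+(p-1)) = 2*n*(p-1) := by ring
    omega
  obtain ⟨jj, hjj⟩ := hexj
  have hmj : m ≠ jj := fun hEq => by rw [hEq, hjj] at hm; omega
  exact lemC hp m jj hmj d hm (by rw [← hA m]; exact hm) hjj
    (by rw [← hA jj]; exact hjj) h2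

end FieldLemmas

end Specialized

end PBaux

/-- Let `k` be an algebraically closed field of characteristic `p > 2`,
`A₀ = k[x₁,y₁,…,xₙ,yₙ]/(xᵢᵖ, yᵢᵖ)` with the standard Poisson bracket, `m` its maximal ideal
and `g = m²` viewed as a Lie algebra under the Poisson bracket.  Then the derived subalgebra
`[g, g]` (the span of all brackets of elements of `m²`, computed here via representatives in
the square `M²` of the ideal `M` of polynomials without constant term) equals the span of the
(images of the) monomials of degrees `2` through `2n(p−1) − 1`. -/
theorem derived_subalgebra_eq_span_monomials (k : Type*) [Field k] [IsAlgClosed k]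
    (p : ℕ) [CharP k p] (hp : 2 < p) (n : ℕ) :
    Submodule.span k
        {z : MvPolynomial (Fin n × Fin 2) k ⧸ truncationIdeal k p n |
          ∃ f g : MvPolynomial (Fin n × Fin 2) k,
            f ∈ (Ideal.span (Set.range (X : Fin n × Fin 2 → MvPolynomial (Fin n × Fin 2) k))) ^ 2 ∧
            g ∈ (Ideal.span (Set.range (X : Fin n × Fin 2 → MvPolynomial (Fin n × Fin 2) k))) ^ 2 ∧
            z = Ideal.Quotient.mk (truncationIdeal k p n) (poissonBracket f g)} =
      Submodule.span k
        {z : MvPolynomial (Fin n × Fin 2) k ⧸ truncationIdeal k p n |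
          ∃ d : (Fin n × Fin 2) →₀ ℕ, (∀ s, d s ≤ p - 1) ∧
            2 ≤ (d.sum fun _ m => m) ∧ (d.sum fun _ m => m) ≤ 2 * n * (p - 1) - 1 ∧
            z = Ideal.Quotient.mk (truncationIdeal k p n) (monomial d (1 : k))} := by
  show Submodule.span k (PBaux.genSet k p n) = Submodule.span k (PBaux.monSet k p n)
  apply le_antisymm
  · rw [Submodule.span_le]
    rintro z ⟨f, g, hf, hg, rfl⟩
    exact PBaux.dir1 hp f g hf hg
  · rw [Submodule.span_le]
    rintro z ⟨d, h1, h2, h3, rfl⟩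
    exact PBaux.dir2 hp d h1 h2 h3
end

section
/- Let k be a field of characteristic p ≥ 3, and let A₁ = k[x,y]/(x^p,y^p) with Poisson bracket {y,x} = 1 and maximal ideal m₁. Then for every integer l ≥ 0 with m₁^l ≠ m₁^{l+1}, the adjoint action of the Lie algebra sl₂ ≅ m₁²/m₁³ (under the Poisson bracket) on the graded piece m₁^l/m₁^{l+1} is an irreducible representation. -/
/-- Index set of the monomial basis `xᵃyᵇ`, `a + b = l`, of the graded piece
`m₁^l/m₁^{l+1}` of `k[x,y]/(xᵖ,yᵖ)`. -/
def gradedIdx (p l : ℕ) : Type := {q : Fin p × Fin p // (q.1 : ℕ) + (q.2 : ℕ) = l}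

/-- The graded piece `m₁^l/m₁^{l+1}`, realised as functions on its monomial basis. -/
abbrev GradedPiece (k : Type*) (p l : ℕ) : Type _ := gradedIdx p l → k

/-- Action of `x² ∈ sl₂ ≅ m₁²/m₁³` via the Poisson bracket
`{x², xᵃyᵇ} = −2b x^{a+1} y^{b−1}` (convention `{f,g} = ∂_y f ∂_x g − ∂_x f ∂_y g`). -/
noncomputable def opE {k : Type*} [Field k] {p l : ℕ}
    (f : GradedPiece k p l) : GradedPiece k p l := fun q =>
  if h : 0 < (q.1.1 : ℕ) ∧ (q.1.2 : ℕ) + 1 < p then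
    (-2 * ((q.1.2 : ℕ) + 1 : ℕ) : k) *
      f ⟨(⟨(q.1.1 : ℕ) - 1, by have := q.1.1.isLt; omega⟩, ⟨(q.1.2 : ℕ) + 1, h.2⟩),
        by have := q.2; simp only at this ⊢; omega⟩
  else 0

/-- Action of `y² ∈ sl₂` via `{y², xᵃyᵇ} = 2a x^{a−1} y^{b+1}`. -/
noncomputable def opF {k : Type*} [Field k] {p l : ℕ}
    (f : GradedPiece k p l) : GradedPiece k p l := fun q =>
  if h : 0 < (q.1.2 : ℕ) ∧ (q.1.1 : ℕ) + 1 < p then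
    (2 * ((q.1.1 : ℕ) + 1 : ℕ) : k) *
      f ⟨(⟨(q.1.1 : ℕ) + 1, h.2⟩, ⟨(q.1.2 : ℕ) - 1, by have := q.1.2.isLt; omega⟩),
        by have := q.2; simp only at this ⊢; omega⟩
  else 0

/-- Action of `xy ∈ sl₂` via `{xy, xᵃyᵇ} = (a − b) xᵃyᵇ`. -/
noncomputable def opH {k : Type*} [Field k] {p l : ℕ}
    (f : GradedPiece k p l) : GradedPiece k p l := fun q =>
  ((q.1.1 : ℕ) - (q.1.2 : ℕ) : ℤ) * f q

namespace Sl2Aux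

instance (p l : ℕ) : Fintype (gradedIdx p l) := by unfold gradedIdx; infer_instance
instance (p l : ℕ) : DecidableEq (gradedIdx p l) := by unfold gradedIdx; infer_instance

variable {k : Type*} [Field k] {p l : ℕ}

lemma idx_ext {q r : gradedIdx p l} (h : (q.1.1 : ℕ) = (r.1.1 : ℕ)) : q = r := by
  have hq := q.2; have hr := r.2
  exact Subtype.ext (Prod.ext (Fin.ext h) (Fin.ext (by omega)))

/-- indicator basis vector -/
def e (q : gradedIdx p l) : GradedPiece k p l := fun r => if q = r then 1 else 0

lemma e_apply (q r : gradedIdx p l) :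
    e (k := k) q r = if (q.1.1 : ℕ) = (r.1.1 : ℕ) then 1 else 0 := by
  unfold e
  by_cases h : (q.1.1 : ℕ) = (r.1.1 : ℕ)
  · rw [if_pos h, if_pos (idx_ext h)]
  · rw [if_neg h, if_neg (fun hqr => h (by rw [hqr]))]

def lam (q : gradedIdx p l) : k := ((q.1.1 : ℕ) - (q.1.2 : ℕ) : ℤ)

lemma opH_apply (f : GradedPiece k p l) (q : gradedIdx p l) : opH f q = lam q * f q := rfl

lemma p_prime (k : Type*) [Field k] (p : ℕ) [CharP k p] (hp : 3 ≤ p) : p.Prime := by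
  rcases CharP.char_is_prime_or_zero k p with h | h
  · exact h
  · omega

lemma coeff_ne_zero [CharP k p] (hp : 3 ≤ p) {m : ℕ} (h1 : 0 < m) (h2 : m < p) :
    ((m : ℕ) : k) ≠ 0 := by
  rw [Ne, CharP.cast_eq_zero_iff k p]
  exact fun hd => absurd (Nat.le_of_dvd h1 hd) (by omega)

lemma two_ne_zero' [CharP k p] (hp : 3 ≤ p) : (2 : k) ≠ 0 := by
  have := coeff_ne_zero (k := k) (p := p) (m := 2) hp (by norm_num) (by omega)
  simpa using this

lemma lam_inj [CharP k p] (hp : 3 ≤ p) :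
    Function.Injective (lam (k := k) (p := p) (l := l)) := by
  intro q r h
  apply idx_ext
  by_contra hne
  unfold lam at h
  have hsub : (((((q.1.1 : ℕ) : ℤ) - ((q.1.2 : ℕ) : ℤ)) - (((r.1.1 : ℕ) : ℤ) - ((r.1.2 : ℕ) : ℤ)) : ℤ) : k) = 0 := by
    rw [Int.cast_sub, h, sub_self]
  have heq : ((((q.1.1 : ℕ) : ℤ) - ((q.1.2 : ℕ) : ℤ)) - (((r.1.1 : ℕ) : ℤ) - ((r.1.2 : ℕ) : ℤ)) : ℤ)
      = 2 * (((q.1.1 : ℕ) : ℤ) - ((r.1.1 : ℕ) : ℤ)) := by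
    have hq := q.2; have hr := r.2; omega
  rw [heq, CharP.intCast_eq_zero_iff k p] at hsub
  have hpz : Prime (p : ℤ) := Nat.prime_iff_prime_int.mp (p_prime k p hp)
  rcases hpz.dvd_mul.mp hsub with h2 | h2
  · have := Int.le_of_dvd (by norm_num) h2; omega
  · have h1 := q.1.1.isLt
    have h2' := r.1.1.isLt
    have h0 := Int.eq_zero_of_abs_lt_dvd h2 (by rw [abs_sub_lt_iff]; omega)
    omega

lemma opE_single (q q' : gradedIdx p l) (hstep : (q'.1.1 : ℕ) = (q.1.1 : ℕ) + 1) :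
    opE (e (k := k) q) = (-2 * ((q.1.2 : ℕ) : k)) • e q' := by
  have hq := q.2; have hq' := q'.2
  have hap : (q.1.1 : ℕ) + 1 < p := by have := q'.1.1.isLt; omega
  have hb1 : 1 ≤ (q.1.2 : ℕ) := by have := q'.1.2.isLt; omega
  have hblt := q.1.2.isLt
  funext r
  have hr := r.2
  simp only [opE, Pi.smul_apply, smul_eq_mul, e_apply]
  split
  · next h =>
    by_cases hc : (q'.1.1 : ℕ) = (r.1.1 : ℕ)
    · erw [e_apply]; dsimp only; rw [if_pos (by omega), if_pos hc]
      have hb : ((r.1.2 : ℕ) + 1 : ℕ) = (q.1.2 : ℕ) := by omega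
      rw [mul_one, mul_one, ← hb]
    · erw [e_apply]; dsimp only; rw [if_neg (by omega), if_neg hc, mul_zero, mul_zero]
  · next h =>
    rw [if_neg (fun hc => h (by omega)), mul_zero]

lemma opF_single (q q' : gradedIdx p l) (hstep : (q'.1.1 : ℕ) + 1 = (q.1.1 : ℕ)) :
    opF (e (k := k) q) = (2 * ((q.1.1 : ℕ) : k)) • e q' := by
  have hq := q.2; have hq' := q'.2
  have hbp : (q.1.2 : ℕ) + 1 < p := by have := q'.1.2.isLt; omega
  have ha1 : 1 ≤ (q.1.1 : ℕ) := by omega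
  have halt := q.1.1.isLt
  funext r
  have hr := r.2
  simp only [opF, Pi.smul_apply, smul_eq_mul, e_apply]
  split
  · next h =>
    by_cases hc : (q'.1.1 : ℕ) = (r.1.1 : ℕ)
    · erw [e_apply]; dsimp only; rw [if_pos (by omega), if_pos hc]
      have ha : ((r.1.1 : ℕ) + 1 : ℕ) = (q.1.1 : ℕ) := by omega
      rw [mul_one, mul_one, ← ha]
    · erw [e_apply]; dsimp only; rw [if_neg (by omega), if_neg hc, mul_zero, mul_zero]
  · next h =>
    rw [if_neg (fun hc => h (by omega)), mul_zero]

end Sl2Aux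
namespace Sl2Aux
open scoped Classical
variable {k : Type*} [Field k] {p l : ℕ}

lemma coord_mem [CharP k p] (hp : 3 ≤ p) {U : Submodule k (GradedPiece k p l)}
    (hH : ∀ f ∈ U, opH f ∈ U) :
    ∀ (n : ℕ) (f : GradedPiece k p l), f ∈ U →
      (Finset.univ.filter fun r => f r ≠ 0).card ≤ n →
      ∀ q, f q • e q ∈ U := by
  intro n
  induction n with
  | zero =>
    intro f hf hcard q
    by_cases hq : f q = 0
    · rw [hq, zero_smul]; exact U.zero_mem
    · exfalso
      have : q ∈ Finset.univ.filter fun r => f r ≠ 0 := by simp [hq]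
      have := Finset.card_pos.mpr ⟨q, this⟩
      omega
  | succ n ih =>
    intro f hf hcard q
    by_cases hq : f q = 0
    · rw [hq, zero_smul]; exact U.zero_mem
    by_cases huniq : ∀ r, r ≠ q → f r = 0
    · have hfe : f q • e q = f := by
        funext r
        by_cases hr : r = q
        · subst hr; simp [e]
        · simp only [Pi.smul_apply, smul_eq_mul, e]
          rw [if_neg fun h => hr h.symm, mul_zero, huniq r hr]
      rw [hfe]; exact hf
    · push_neg at huniq
      obtain ⟨q₀, hq₀ne, hq₀⟩ := huniq
      set g : GradedPiece k p l := opH f - lam (k := k) q₀ • f with hg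
      have hgU : g ∈ U := U.sub_mem (hH f hf) (U.smul_mem _ hf)
      have hgval : ∀ r, g r = (lam r - lam q₀) * f r := by
        intro r
        simp only [hg, Pi.sub_apply, Pi.smul_apply, opH_apply, smul_eq_mul, sub_mul]
      have hsub : (Finset.univ.filter fun r => g r ≠ 0) ⊆
          (Finset.univ.filter fun r => f r ≠ 0).erase q₀ := by
        intro r hr
        simp only [Finset.mem_filter, Finset.mem_univ, true_and] at hr
        rw [Finset.mem_erase]
        constructor
        · rintro rfl
          exact hr (by rw [hgval, sub_self, zero_mul])
        · simp only [Finset.mem_filter, Finset.mem_univ, true_and]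
          intro hfr
          exact hr (by rw [hgval, hfr, mul_zero])
      have hq₀mem : q₀ ∈ Finset.univ.filter fun r => f r ≠ 0 := by simp [hq₀]
      have hcard' : (Finset.univ.filter fun r => g r ≠ 0).card ≤ n := by
        have h1 := Finset.card_le_card hsub
        rw [Finset.card_erase_of_mem hq₀mem] at h1
        have h2 := Finset.card_pos.mpr ⟨q₀, hq₀mem⟩
        omega
      have h1 := ih g hgU hcard' q
      have hgq : g q ≠ 0 := by
        rw [hgval]
        exact mul_ne_zero (sub_ne_zero.mpr fun hl' => hq₀ne (lam_inj hp hl').symm) hq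
      have : f q • e (k := k) q = ((g q)⁻¹ * f q) • (g q • e q) := by
        rw [smul_smul, mul_comm (g q)⁻¹ (f q), mul_assoc, inv_mul_cancel₀ hgq, mul_one]
      rw [this]
      exact U.smul_mem _ h1

lemma e_mem_up [CharP k p] (hp : 3 ≤ p) {U : Submodule k (GradedPiece k p l)}
    (hE : ∀ f ∈ U, opE f ∈ U) {q q' : gradedIdx p l}
    (hmem : e q ∈ U) (hstep : (q'.1.1 : ℕ) = (q.1.1 : ℕ) + 1) : e q' ∈ U := by
  have h1 := hE _ hmem
  rw [opE_single q q' hstep] at h1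
  have hb1 : 1 ≤ (q.1.2 : ℕ) := by
    have := q'.1.2.isLt; have := q.2; have := q'.2; omega
  have hc : (-2 * ((q.1.2 : ℕ) : k)) ≠ 0 := by
    exact mul_ne_zero (neg_ne_zero.mpr (two_ne_zero' hp)) (coeff_ne_zero hp hb1 q.1.2.isLt)
  have := U.smul_mem (-2 * ((q.1.2 : ℕ) : k))⁻¹ h1
  rwa [smul_smul, inv_mul_cancel₀ hc, one_smul] at this

lemma e_mem_down [CharP k p] (hp : 3 ≤ p) {U : Submodule k (GradedPiece k p l)}
    (hF : ∀ f ∈ U, opF f ∈ U) {q q' : gradedIdx p l}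
    (hmem : e q ∈ U) (hstep : (q'.1.1 : ℕ) + 1 = (q.1.1 : ℕ)) : e q' ∈ U := by
  have h1 := hF _ hmem
  rw [opF_single q q' hstep] at h1
  have ha1 : 1 ≤ (q.1.1 : ℕ) := by omega
  have hc : (2 * ((q.1.1 : ℕ) : k)) ≠ 0 := by
    exact mul_ne_zero (two_ne_zero' hp) (coeff_ne_zero hp ha1 q.1.1.isLt)
  have := U.smul_mem (2 * ((q.1.1 : ℕ) : k))⁻¹ h1
  rwa [smul_smul, inv_mul_cancel₀ hc, one_smul] at this

lemma all_e_mem [CharP k p] (hp : 3 ≤ p) {U : Submodule k (GradedPiece k p l)}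
    (hE : ∀ f ∈ U, opE f ∈ U) (hF : ∀ f ∈ U, opF f ∈ U) {q₀ : gradedIdx p l}
    (hmem : e q₀ ∈ U) : ∀ q : gradedIdx p l, e (k := k) q ∈ U := by
  have up : ∀ d : ℕ, ∀ q : gradedIdx p l, (q.1.1 : ℕ) = (q₀.1.1 : ℕ) + d → e (k := k) q ∈ U := by
    intro d
    induction d with
    | zero => intro q hq; rwa [idx_ext (by omega : (q.1.1 : ℕ) = (q₀.1.1 : ℕ))]
    | succ d ih =>
      intro q hq
      have hq2 := q.2; have hq02 := q₀.2
      have hblt := q₀.1.2.isLt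
      have halt := q.1.1.isLt
      have hmid : ((q.1.1 : ℕ) - 1) + ((q.1.2 : ℕ) + 1) = l := by omega
      set mid : gradedIdx p l :=
        ⟨(⟨(q.1.1 : ℕ) - 1, by omega⟩, ⟨(q.1.2 : ℕ) + 1, by omega⟩), hmid⟩ with hmiddef
      have hmem' : e (k := k) mid ∈ U := ih mid (by simp [hmiddef] <;> omega)
      exact e_mem_up hp hE hmem' (by simp [hmiddef] <;> omega)
  have down : ∀ d : ℕ, ∀ q : gradedIdx p l, (q.1.1 : ℕ) + d = (q₀.1.1 : ℕ) → e (k := k) q ∈ U := by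
    intro d
    induction d with
    | zero => intro q hq; rwa [idx_ext (by omega : (q.1.1 : ℕ) = (q₀.1.1 : ℕ))]
    | succ d ih =>
      intro q hq
      have hq2 := q.2; have hq02 := q₀.2
      have halt0 := q₀.1.1.isLt
      have hblt := q.1.2.isLt
      have hmid : ((q.1.1 : ℕ) + 1) + ((q.1.2 : ℕ) - 1) = l := by omega
      set mid : gradedIdx p l :=
        ⟨(⟨(q.1.1 : ℕ) + 1, by omega⟩, ⟨(q.1.2 : ℕ) - 1, by omega⟩), hmid⟩ with hmiddef
      have hmem' : e (k := k) mid ∈ U := ih mid (by simp [hmiddef] <;> omega)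
      exact e_mem_down hp hF hmem' (by simp [hmiddef] <;> omega)
  intro q
  rcases le_or_gt (q₀.1.1 : ℕ) (q.1.1 : ℕ) with h | h
  · exact up ((q.1.1 : ℕ) - (q₀.1.1 : ℕ)) q (by omega)
  · exact down ((q₀.1.1 : ℕ) - (q.1.1 : ℕ)) q (by omega)

end Sl2Aux


/-- Let `k` be a field of characteristic `p ≥ 3` and
`A₁ = k[x,y]/(xᵖ,yᵖ)` with Poisson bracket `{y,x} = 1` and maximal ideal `m₁`.  For every
`l ≥ 0` with `m₁^l ≠ m₁^{l+1}` (equivalently, the graded piece has a nonempty monomial basis),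
the adjoint action of `sl₂ ≅ m₁²/m₁³` on the graded piece `m₁^l/m₁^{l+1}` is irreducible:
the space is nonzero and every subspace invariant under the actions of `x²`, `y²`, `xy`
is `⊥` or `⊤`. -/
theorem sl2_action_on_graded_piece_irreducible (k : Type*) [Field k] (p : ℕ) [CharP k p]
    (hp : 3 ≤ p) (l : ℕ) (hl : Nonempty (gradedIdx p l)) :
    (⊥ : Submodule k (GradedPiece k p l)) ≠ ⊤ ∧
    ∀ U : Submodule k (GradedPiece k p l),
      (∀ f ∈ U, opE f ∈ U) → (∀ f ∈ U, opF f ∈ U) → (∀ f ∈ U, opH f ∈ U) →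
      U = ⊥ ∨ U = ⊤ := by
  obtain ⟨q₀⟩ := hl
  constructor
  · intro hbt
    have h1 : Sl2Aux.e (k := k) q₀ ∈ (⊤ : Submodule k (GradedPiece k p l)) := trivial
    rw [← hbt, Submodule.mem_bot] at h1
    have := congrFun h1 q₀
    simp [Sl2Aux.e] at this
  · intro U hE hF hH
    by_cases hU : U = ⊥
    · exact Or.inl hU
    right
    obtain ⟨f, hfU, hf0⟩ := (Submodule.ne_bot_iff U).mp hU
    have hfq : ∃ q, f q ≠ 0 := by
      by_contra h
      push_neg at h
      exact hf0 (funext h)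
    obtain ⟨q, hq⟩ := hfq
    classical
    have h1 := Sl2Aux.coord_mem hp hH ((Finset.univ.filter fun r => f r ≠ 0).card) f hfU le_rfl q
    have h2 : Sl2Aux.e (k := k) q ∈ U := by
      have := U.smul_mem (f q)⁻¹ h1
      rwa [smul_smul, inv_mul_cancel₀ hq, one_smul] at this
    have hall := Sl2Aux.all_e_mem hp hE hF h2
    rw [Submodule.eq_top_iff']
    intro g
    rw [pi_eq_sum_univ g]
    exact Submodule.sum_mem U fun i _ => Submodule.smul_mem U _ (hall i)
end

section
/- Let R be a finitely generated algebra over a perfect field k such that the nilradical N of R is nilpotent. Then the natural map R_red((h)) → (R((h)))_red is an isomorphism, i.e. the reduction of the Laurent series ring R((h)) equals the Laurent series ring over the reduction R_red = R/N. -/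
open HahnSeries

lemma aux_sq {S : Type*} [CommRing S] (y : HahnSeries ℤ S)
    (h : y.leadingCoeff * y.leadingCoeff ≠ 0) :
    y * y ≠ 0 ∧ (y * y).leadingCoeff = y.leadingCoeff * y.leadingCoeff := by
  have hc := HahnSeries.coeff_mul_order_add_order y y
  have hne : y * y ≠ 0 := by
    intro h0
    rw [h0, HahnSeries.coeff_zero] at hc
    exact h hc.symm
  have hy : y ≠ 0 := by rintro rfl; simp at h
  refine ⟨hne, ?_⟩
  have hord : (y * y).order = y.order + y.order := by
    apply le_antisymm
    · apply HahnSeries.order_le_of_coeff_ne_zero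
      rw [hc]; exact h
    · rw [HahnSeries.order_of_ne hy, HahnSeries.order_of_ne hne, ← Set.IsWF.min_add]
      exact Set.IsWF.min_le_min_of_subset HahnSeries.support_mul_subset
  rw [HahnSeries.leadingCoeff_eq, hord, hc]

lemma aux_reduced {S : Type*} [CommRing S] [IsReduced S] :
    IsReduced (HahnSeries ℤ S) := by
  constructor
  rintro x ⟨n, hn⟩
  by_contra hx
  have hlc : x.leadingCoeff ≠ 0 := HahnSeries.leadingCoeff_ne_zero.mpr hx
  have hlcpow : ∀ m : ℕ, m ≠ 0 → x.leadingCoeff ^ m ≠ 0 := by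
    intro m hm h0
    exact hlc (IsReduced.eq_zero _ ⟨m, h0⟩)
  have key : ∀ k : ℕ, x ^ (2 ^ k) ≠ 0 ∧
      (x ^ (2 ^ k)).leadingCoeff = x.leadingCoeff ^ (2 ^ k) := by
    intro k
    induction k with
    | zero => exact ⟨by simpa using hx, by simp⟩
    | succ k ih =>
      have h2 : x.leadingCoeff ^ (2 ^ k) * x.leadingCoeff ^ (2 ^ k) ≠ 0 := by
        rw [← _root_.pow_add]
        exact hlcpow _ (by positivity)
      have h2' : (x ^ (2 ^ k)).leadingCoeff * (x ^ (2 ^ k)).leadingCoeff ≠ 0 := by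
        rw [ih.2]; exact h2
      obtain ⟨hne, hlc2⟩ := aux_sq (x ^ (2 ^ k)) h2'
      have hpow : x ^ (2 ^ (k + 1)) = x ^ (2 ^ k) * x ^ (2 ^ k) := by
        rw [← _root_.pow_add]; congr 1; rw [pow_succ, mul_two]
      constructor
      · rw [hpow]; exact hne
      · rw [hpow, hlc2, ih.2, ← _root_.pow_add]; congr 1; rw [pow_succ, mul_two]
  have h2n : x ^ (2 ^ n) = 0 := by
    have hle : n ≤ 2 ^ n := Nat.le_of_lt (Nat.lt_two_pow_self (n := n))
    calc x ^ (2 ^ n) = x ^ n * x ^ (2 ^ n - n) := by rw [← _root_.pow_add, Nat.add_sub_cancel' hle]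
    _ = 0 := by rw [hn, zero_mul]
  exact (key n).1 h2n

/-- Let `R` be a finitely generated algebra over a perfect field `k` such
that the nilradical `N` of `R` is nilpotent.  Then the natural (coefficientwise reduction)
ring homomorphism `R((h)) → R_red((h))` is surjective with kernel the nilradical of `R((h))`;
equivalently, the natural map `R_red((h)) → (R((h)))_red` is an isomorphism. -/
theorem laurent_reduction_iso (k : Type*) [Field k] [PerfectField k]
    (R : Type*) [CommRing R] [Algebra k R] (hfg : Algebra.FiniteType k R)
    (hnil : ∃ m : ℕ, nilradical R ^ m = ⊥)
    (Φ : LaurentSeries R →+* LaurentSeries (R ⧸ nilradical R))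
    (hΦ : ∀ (x : LaurentSeries R) (i : ℤ),
      (Φ x).coeff i = Ideal.Quotient.mk (nilradical R) (x.coeff i)) :
    Function.Surjective Φ ∧ RingHom.ker Φ = nilradical (LaurentSeries R) ∧
    Nonempty ((LaurentSeries R ⧸ nilradical (LaurentSeries R)) ≃+*
      LaurentSeries (R ⧸ nilradical R)) := by
  classical
  have hred : IsReduced (R ⧸ nilradical R) :=
    (Ideal.isRadical_iff_quotient_reduced _).mp (Ideal.radical_isRadical (0 : Ideal R))
  have hredL : IsReduced (LaurentSeries (R ⧸ nilradical R)) := aux_reduced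
  -- surjectivity
  have hsurj : Function.Surjective Φ := by
    intro y
    set s : (R ⧸ nilradical R) → R :=
      Function.surjInv Ideal.Quotient.mk_surjective with hs
    have hsec : ∀ a, Ideal.Quotient.mk (nilradical R) (s a) = a := fun a =>
      Function.surjInv_eq Ideal.Quotient.mk_surjective a
    set g : ℤ → R := fun i => if y.coeff i = 0 then 0 else s (y.coeff i) with hg
    have hsupp : Function.support g ⊆ Function.support y.coeff := by
      intro i hi
      simp only [hg, Function.mem_support, ne_eq] at hi ⊢
      intro h0; apply hi; simp [h0]
    refine ⟨⟨g, y.isPWO_support.mono hsupp⟩, ?_⟩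
    ext i
    rw [hΦ]
    show Ideal.Quotient.mk (nilradical R) (g i) = y.coeff i
    by_cases h0 : y.coeff i = 0
    · simp [hg, h0]
    · simp [hg, h0, hsec]
  -- kernel
  have hker : RingHom.ker Φ = nilradical (LaurentSeries R) := by
    ext x
    simp only [RingHom.mem_ker, mem_nilradical]
    constructor
    · intro hx
      have hco : ∀ i, x.coeff i ∈ nilradical R := by
        intro i
        have := hΦ x i
        rw [hx, HahnSeries.coeff_zero] at this
        exact (Ideal.Quotient.eq_zero_iff_mem).mp this.symm
      obtain ⟨m, hm⟩ := hnil
      refine ⟨m + 1, ?_⟩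
      have main : ∀ j : ℕ, ∀ i : ℤ, (x ^ (j + 1)).coeff i ∈ nilradical R ^ (j + 1) := by
        intro j
        induction j with
        | zero => simpa using hco
        | succ j ih =>
          intro i
          rw [pow_succ x, HahnSeries.coeff_mul]
          apply Ideal.sum_mem
          intro p _
          exact Ideal.mul_mem_mul (ih p.1) (hco p.2)
      ext i
      have := main m i
      have hle : nilradical R ^ (m + 1) ≤ nilradical R ^ m := Ideal.pow_le_pow_right (by omega)
      rw [hm] at hle
      simpa using hle this
    · rintro ⟨n, hn⟩
      have : IsNilpotent (Φ x) := ⟨n, by rw [← map_pow, hn, map_zero]⟩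
      exact IsReduced.eq_zero _ this
  refine ⟨hsurj, hker, ⟨?_⟩⟩
  rw [← hker]
  exact RingHom.quotientKerEquivOfSurjective hsurj
end

section
/- Let G be a group, let A be an abelian group on which ℤ/2ℤ acts by inversion a ↦ a^{−1}, and suppose G admits a filtration G = G₁ ⊇ G₂ ⊇ … by normal ℤ/2ℤ-stable subgroups with ∩Gₙ = 1, G complete with respect to this filtration, and each quotient Gₙ/G_{n+1} abelian and uniquely 2-divisible. Then H¹(ℤ/2ℤ, G) is trivial, i.e. for any involution τ of G, every element g ∈ G with g·τ(g) = 1 is of the form g = x^{−1}·τ(x) for some x ∈ G. -/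
/-- Let `G` be a group with a filtration `G = G₁ ⊇ G₂ ⊇ …` by normal
subgroups with trivial intersection, with `G` complete with respect to this filtration, with
abelian and uniquely `2`-divisible quotients `Gₙ/G_{n+1}`, and stable under an involution `τ`.
Then `H¹(ℤ/2ℤ, G)` (for the action by `τ`) is trivial: every `g ∈ G` with `g·τ(g) = 1` is of
the form `g = x⁻¹·τ(x)`. -/
theorem h1_z2_trivial_of_filtration (G : Type*) [Group G] (N : ℕ → Subgroup G)
    (hnorm : ∀ n, (N n).Normal)
    (htop : N 1 = ⊤)
    (hanti : ∀ n, N (n + 1) ≤ N n)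
    (hsep : ∀ g : G, (∀ n, g ∈ N n) → g = 1)
    (hcomplete : ∀ g : ℕ → G, (∀ n, (g n)⁻¹ * g (n + 1) ∈ N n) →
      ∃ x : G, ∀ n, (g n)⁻¹ * x ∈ N n)
    (hab : ∀ n, ∀ x ∈ N n, ∀ y ∈ N n, x * y * x⁻¹ * y⁻¹ ∈ N (n + 1))
    (hdiv : ∀ n, ∀ y ∈ N n, ∃ x ∈ N n, x ^ 2 * y⁻¹ ∈ N (n + 1))
    (huniq : ∀ n, ∀ x ∈ N n, ∀ x' ∈ N n, x ^ 2 * (x' ^ 2)⁻¹ ∈ N (n + 1) →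
      x * x'⁻¹ ∈ N (n + 1))
    (τ : G →* G) (hinv : ∀ g, τ (τ g) = g) (hτN : ∀ n, ∀ x ∈ N n, τ x ∈ N n) :
    ∀ g : G, g * τ g = 1 → ∃ x : G, g = x⁻¹ * τ x := by
  intro g hg
  have hN0 : ∀ a : G, a ∈ N 0 := fun a => hanti 0 (htop ▸ Subgroup.mem_top a)
  -- cocycle condition propagates under twisted conjugation
  have coc : ∀ x : G, (x * g * (τ x)⁻¹) * τ (x * g * (τ x)⁻¹) = 1 := by
    intro x
    have : τ (x * g * (τ x)⁻¹) = τ x * τ g * x⁻¹ := by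
      simp [map_mul, map_inv, hinv]
    rw [this]
    calc x * g * (τ x)⁻¹ * (τ x * τ g * x⁻¹) = x * (g * τ g) * x⁻¹ := by group
    _ = 1 := by rw [hg]; group
  -- key approximation step
  have key : ∀ n (h : G), h ∈ N n → h * τ h = 1 →
      ∃ y ∈ N n, y * h * (τ y)⁻¹ ∈ N (n + 1) := by
    intro n h hhn hcoc
    obtain ⟨y, hyn, hy2⟩ := hdiv n h⁻¹ ((N n).inv_mem hhn)
    have hy2' : y ^ 2 * h ∈ N (n + 1) := by simpa using hy2
    refine ⟨y, hyn, ?_⟩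
    have hτh : τ h = h⁻¹ := eq_inv_of_mul_eq_one_right hcoc
    haveI := hnorm (n + 1)
    have hyh : y * h ∈ N n := (N n).mul_mem hyn hhn
    have hτy : τ y ∈ N n := hτN n y hyn
    have hsq : τ y ^ 2 * ((y * h) ^ 2)⁻¹ ∈ N (n + 1) := by
      rw [← QuotientGroup.eq_one_iff (N := N (n + 1)) (τ y ^ 2 * ((y * h) ^ 2)⁻¹)]
      have e1 : ((y : G ⧸ N (n + 1)) : G ⧸ N (n + 1)) ^ 2 * (h : G ⧸ N (n + 1)) = 1 := by
        have := (QuotientGroup.eq_one_iff (y ^ 2 * h)).2 hy2'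
        rw [QuotientGroup.mk_mul, QuotientGroup.mk_pow] at this
        simpa using this
      have e2 : ((τ y : G) : G ⧸ N (n + 1)) ^ 2 * ((h : G) : G ⧸ N (n + 1))⁻¹ = 1 := by
        have hm : τ y ^ 2 * h⁻¹ ∈ N (n + 1) := by
          have := hτN (n + 1) _ hy2'
          simpa [map_mul, map_pow, hτh] using this
        have := (QuotientGroup.eq_one_iff (τ y ^ 2 * h⁻¹)).2 hm
        rw [QuotientGroup.mk_mul, QuotientGroup.mk_pow] at this
        simpa using this
      have e3 : ((y : G) : G ⧸ N (n + 1)) * (h : G) = ((h : G) : G ⧸ N (n + 1)) * (y : G) := by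
        have := (QuotientGroup.eq_one_iff (y * h * y⁻¹ * h⁻¹)).2 (hab n y hyn h hhn)
        rw [QuotientGroup.mk_mul, QuotientGroup.mk_mul, QuotientGroup.mk_mul,
          QuotientGroup.mk_inv, QuotientGroup.mk_inv] at this
        exact commutatorElement_eq_one_iff_mul_comm.mp (by
          rw [commutatorElement_def]; simpa [mul_assoc] using this)
      set a : G ⧸ N (n + 1) := ((y : G) : G ⧸ N (n + 1)) with ha
      set b : G ⧸ N (n + 1) := ((h : G) : G ⧸ N (n + 1)) with hb
      set c : G ⧸ N (n + 1) := ((τ y : G) : G ⧸ N (n + 1)) with hc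
      have hcab : Commute a b := e3
      have hab2 : (a * b) ^ 2 = b := by
        rw [hcab.mul_pow, sq b, ← mul_assoc, e1, one_mul]
      have hc2 : c ^ 2 = b := by
        rw [mul_inv_eq_one] at e2; exact e2
      rw [QuotientGroup.mk_mul, QuotientGroup.mk_inv, QuotientGroup.mk_pow,
        QuotientGroup.mk_pow, QuotientGroup.mk_mul]
      rw [← ha, ← hb, ← hc, hab2, hc2, mul_inv_cancel]
    have h1 := huniq n (τ y) hτy (y * h) hyh hsq
    have h2 := (N (n + 1)).inv_mem h1
    simpa [mul_inv_rev, mul_assoc] using h2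
  -- step on approximants
  have step : ∀ n (x : G), x * g * (τ x)⁻¹ ∈ N n →
      ∃ x' : G, x⁻¹ * x' ∈ N n ∧ x' * g * (τ x')⁻¹ ∈ N (n + 1) := by
    intro n x hx
    obtain ⟨y, hyn, hmem⟩ := key n _ hx (coc x)
    refine ⟨y * x, ?_, ?_⟩
    · have := (hnorm n).conj_mem y hyn x⁻¹
      simpa [mul_assoc] using this
    · have : (y * x) * g * (τ (y * x))⁻¹ = y * (x * g * (τ x)⁻¹) * (τ y)⁻¹ := by
        simp only [map_mul, mul_inv_rev]
        group
      rw [this]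
      exact hmem
  -- totalize the step function
  have step' : ∀ n (x : G), ∃ x' : G, (x * g * (τ x)⁻¹ ∈ N n →
      x⁻¹ * x' ∈ N n ∧ x' * g * (τ x')⁻¹ ∈ N (n + 1)) := by
    intro n x
    by_cases hx : x * g * (τ x)⁻¹ ∈ N n
    · obtain ⟨x', h1, h2⟩ := step n x hx
      exact ⟨x', fun _ => ⟨h1, h2⟩⟩
    · exact ⟨1, fun h => absurd h hx⟩
  choose F hF using step'
  set seq : ℕ → G := fun n => Nat.rec 1 (fun n x => F n x) n with hseq
  have seq0 : seq 0 = 1 := rfl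
  have seqS : ∀ n, seq (n + 1) = F n (seq n) := fun n => rfl
  have inv : ∀ n, seq n * g * (τ (seq n))⁻¹ ∈ N n := by
    intro n
    induction n with
    | zero => exact hN0 _
    | succ n ih =>
      rw [seqS]
      exact (hF n (seq n) ih).2
  have diff : ∀ n, (seq n)⁻¹ * seq (n + 1) ∈ N n := by
    intro n
    rw [seqS]
    exact (hF n (seq n) (inv n)).1
  obtain ⟨x, hx⟩ := hcomplete seq diff
  refine ⟨x, ?_⟩
  have hxg : x * g * (τ x)⁻¹ = 1 := by
    apply hsep
    intro n
    haveI := hnorm n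
    rw [← QuotientGroup.eq_one_iff (N := N n)]
    have hz : ((seq n)⁻¹ * x : G) ∈ N n := hx n
    have hz' : (τ ((seq n)⁻¹ * x) : G) ∈ N n := hτN n _ hz
    have e0 : ((seq n * g * (τ (seq n))⁻¹ : G) : G ⧸ N n) = 1 :=
      (QuotientGroup.eq_one_iff _).2 (inv n)
    have e1 : (((seq n)⁻¹ * x : G) : G ⧸ N n) = 1 := (QuotientGroup.eq_one_iff _).2 hz
    have e2 : ((τ ((seq n)⁻¹ * x) : G) : G ⧸ N n) = 1 := (QuotientGroup.eq_one_iff _).2 hz'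
    have hxs : ((x : G) : G ⧸ N n) = ((seq n : G) : G ⧸ N n) := by
      rw [QuotientGroup.mk_mul, QuotientGroup.mk_inv] at e1
      rw [inv_mul_eq_one] at e1
      exact e1.symm
    have hτxs : ((τ x : G) : G ⧸ N n) = ((τ (seq n) : G) : G ⧸ N n) := by
      rw [map_mul, map_inv, QuotientGroup.mk_mul, QuotientGroup.mk_inv] at e2
      rw [inv_mul_eq_one] at e2
      exact e2.symm
    rw [QuotientGroup.mk_mul, QuotientGroup.mk_mul, QuotientGroup.mk_inv, hxs, hτxs]
    rw [QuotientGroup.mk_mul, QuotientGroup.mk_mul, QuotientGroup.mk_inv] at e0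
    exact e0
  have : x * g = τ x := by
    have := hxg
    rw [mul_inv_eq_one] at this
    exact this
  rw [← this]
  group
end
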